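/- arXiv:1206.1714 — 10 statements merged into one kernel-verified Lean document; each statement's English description precedes it below -/
import Mathlib

section
/- Let G be a group finitely generated as a monoid by a finite set A. The group word problem {v ∈ A* : v̄ = 1} is a regular language if and only if G is finite. -/
/-- An asynchronous two-tape finite state automaton: in each step it reads at
most one symbol from each tape. -/
structure AsyncFSA (A : Type*) (B : Type*) where
  Q : Type
  [fin : Finite Q]
  init : Q
  accept : Set Q
  trans : Q → Option A → Option B → Q → Prop

namespace AsyncFSA

variable {A B : Type*}

/-- Computations of an asynchronous automaton. -/
inductive Reaches (M : AsyncFSA A B) : M.Q → List A → List B → M.Q → Prop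
  | refl (q : M.Q) : Reaches M q [] [] q
  | step {p q r : M.Q} {a : Option A} {b : Option B} {u : List A} {v : List B} :
      M.trans p a b q → Reaches M q u v r →
      Reaches M p (a.toList ++ u) (b.toList ++ v) r

/-- Acceptance of a pair of strings. -/
def Accepts (M : AsyncFSA A B) (u : List A) (v : List B) : Prop :=
  ∃ q ∈ M.accept, M.Reaches M.init u v q

end AsyncFSA

/-- A relation on strings is rational if it is decided by an asynchronous
two-tape finite state automaton. -/
def IsRationalRel {A B : Type*} (R : Set (List A × List B)) : Prop :=
  ∃ M : AsyncFSA A B, ∀ p : List A × List B, p ∈ R ↔ M.Accepts p.1 p.2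

/-- Pad a pair of strings to equal length, using `none` as padding symbol. -/
def padPair {A : Type*} (p : List A × List A) : List (Option A × Option A) :=
  List.zip (p.1.map some ++ List.replicate (p.2.length - p.1.length) none)
           (p.2.map some ++ List.replicate (p.1.length - p.2.length) none)

/-- A relation on strings is regular if a synchronous two-tape finite state
automaton (a finite automaton over the padded pair alphabet) accepts a padded
pair exactly when the pair is in the relation. -/
def IsRegularRel {A : Type*} (R : Set (List A × List A)) : Prop :=
  ∃ (Q : Type) (_ : Fintype Q) (M : DFA (Option A × Option A) Q),
    ∀ p : List A × List A, p ∈ R ↔ padPair p ∈ M.accepts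

/-- A language is regular if accepted by a finite state automaton. -/
def IsRegularLang {A : Type*} (L : Set (List A)) : Prop :=
  ∃ (Q : Type) (_ : Fintype Q) (M : DFA A Q), ∀ w, w ∈ L ↔ w ∈ M.accepts

/-- Evaluation of a word in a semigroup (`none` for the empty word). -/
def evalWord {α : Type*} {S : Type*} [Semigroup S] (f : α → S) : List α → Option S
  | [] => none
  | a :: l => some (List.foldl (fun s x => s * f x) (f a) l)

/-- The semigroup word problem with respect to a set `A` of elements:
pairs of nonempty strings over `A` representing the same element. -/
def SWP {S : Type*} [Semigroup S] (A : Set S) : Set (List ↥A × List ↥A) :=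
  {p | p.1 ≠ [] ∧ p.2 ≠ [] ∧
    evalWord Subtype.val p.1 = evalWord Subtype.val p.2}

/-- The monoid word problem with respect to a set `A` of elements. -/
def MWP {M : Type*} [Monoid M] (A : Set M) : Set (List ↥A × List ↥A) :=
  {p | (p.1.map Subtype.val).prod = (p.2.map Subtype.val).prod}

/-- A semigroup has rational word problem if it has a finite generating set
with rational word problem. -/
def HasRationalWP (S : Type*) [Semigroup S] : Prop :=
  ∃ A : Set S, A.Finite ∧ Subsemigroup.closure A = ⊤ ∧ IsRationalRel (SWP A)

/-- Anisimov-type theorem: a group finitely generated as a monoid by `A` has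
regular group word problem iff it is finite. -/
theorem stmt_0 {G : Type*} [Group G] (A : Set G) (hA : A.Finite)
    (hgen : Submonoid.closure A = ⊤) :
    IsRegularLang {w : List ↥A | (w.map Subtype.val).prod = 1} ↔ Finite G := by
  constructor
  · rintro ⟨Q, fQ, M, hM⟩
    have hrep : ∀ g : G, ∃ w : List ↥A, (w.map Subtype.val).prod = g := by
      intro g
      have hg : g ∈ Submonoid.closure A := hgen ▸ Submonoid.mem_top g
      obtain ⟨l, hl, hprod⟩ := Submonoid.exists_list_of_mem_closure hg
      refine ⟨l.attach.map fun x => ⟨x.1, hl x.1 x.2⟩, ?_⟩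
      simpa [List.map_map, Function.comp] using hprod
    choose w hw using hrep
    have hinj : Function.Injective (fun g => M.eval (w g)) := by
      intro g g' h
      have hu := hw g⁻¹
      set u := w g⁻¹ with hudef
      have heval : M.eval (w g) = M.eval (w g') := h
      have h1 : ((w g ++ u).map Subtype.val).prod = 1 := by
        rw [List.map_append, List.prod_append, hw, hu, mul_inv_cancel]
      have keyE : ∀ v : List ↥A, M.eval (v ++ u) = M.evalFrom (M.eval v) u :=
        fun v => M.evalFrom_of_append M.start v u
      have hacc := (hM _).mp h1
      rw [DFA.mem_accepts, keyE, heval, ← keyE, ← DFA.mem_accepts] at hacc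
      have h2 := (hM _).mpr hacc
      rw [Set.mem_setOf_eq, List.map_append, List.prod_append, hw, hu] at h2
      have h1' : g * g⁻¹ = 1 := mul_inv_cancel g
      exact mul_right_cancel (h1'.trans h2.symm)
    exact Finite.of_injective _ hinj
  · intro h
    classical
    have : Fintype G := Fintype.ofFinite G
    obtain ⟨n, ⟨e⟩⟩ : ∃ n, Nonempty (G ≃ Fin n) := ⟨_, ⟨Fintype.equivFin G⟩⟩
    refine ⟨Fin n, inferInstance, ⟨fun q a => e (e.symm q * a.1), e 1, {e 1}⟩, fun v => ?_⟩
    have key : ∀ (v : List ↥A) (g : G),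
        List.foldl (fun (q : Fin n) (a : ↥A) => e (e.symm q * a.1)) (e g) v
          = e (g * (v.map Subtype.val).prod) := by
      intro v
      induction v with
      | nil => simp
      | cons a t ih => intro g; simp [ih, mul_assoc]
    simp only [DFA.mem_accepts, DFA.eval, DFA.evalFrom, key, Set.mem_singleton_iff,
      Set.mem_setOf_eq]
    rw [e.apply_eq_iff_eq]
    constructor
    · intro hv; rw [hv, mul_one]
    · intro hv; simpa using hv
end

section
/- The word problem of the free commutative semigroup on two generators S = ⟨a,b | ab = ba⟩ with respect to A = {a,b} is not a rational relation. -/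
namespace WP3

open AsyncFSA

variable {A B : Type*} {M : AsyncFSA A B}

/-- Projection to first tape contents. -/
def flatA {A B Q : Type*} (L : List (Option A × Option B × Q)) : List A :=
  L.flatMap fun e => e.1.toList

/-- Projection to second tape contents. -/
def flatB {A B Q : Type*} (L : List (Option A × Option B × Q)) : List B :=
  L.flatMap fun e => e.2.1.toList

theorem flatA_nil {A B Q : Type*} : flatA ([] : List (Option A × Option B × Q)) = [] := rfl

theorem flatB_nil {A B Q : Type*} : flatB ([] : List (Option A × Option B × Q)) = [] := rfl

theorem flatA_cons {A B Q : Type*} (e : Option A × Option B × Q) (L) :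
    flatA (e :: L) = e.1.toList ++ flatA L := rfl

theorem flatB_cons {A B Q : Type*} (e : Option A × Option B × Q) (L) :
    flatB (e :: L) = e.2.1.toList ++ flatB L := rfl

theorem flatA_append {A B Q : Type*} (L₁ L₂ : List (Option A × Option B × Q)) :
    flatA (L₁ ++ L₂) = flatA L₁ ++ flatA L₂ :=
  List.flatMap_append

theorem flatB_append {A B Q : Type*} (L₁ L₂ : List (Option A × Option B × Q)) :
    flatB (L₁ ++ L₂) = flatB L₁ ++ flatB L₂ :=
  List.flatMap_append

theorem flat_length_le {A B Q : Type*} (L : List (Option A × Option B × Q)) :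
    (flatA L).length ≤ L.length ∧ (flatB L).length ≤ L.length := by
  induction L with
  | nil => simp [flatA, flatB]
  | cons e L ih =>
    obtain ⟨a, b, p⟩ := e
    have ha : a.toList.length ≤ 1 := by cases a <;> simp
    have hb : b.toList.length ≤ 1 := by cases b <;> simp
    simp only [flatA_cons, flatB_cons, List.length_append, List.length_cons] at *
    omega

theorem reaches_append {q p : M.Q} {u₁ : List A} {v₁ : List B}
    (h₁ : M.Reaches q u₁ v₁ p) :
    ∀ {u₂ : List A} {v₂ : List B} {r : M.Q}, M.Reaches p u₂ v₂ r →
      M.Reaches q (u₁ ++ u₂) (v₁ ++ v₂) r := by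
  induction h₁ with
  | refl q => intro u₂ v₂ r h; simpa using h
  | step ht _ ih =>
    intro u₂ v₂ r h
    simpa [List.append_assoc] using AsyncFSA.Reaches.step ht (ih h)

/-- A chain: alternating ε-computations and consuming transitions. -/
def IsChain (M : AsyncFSA A B) : M.Q → List (Option A × Option B × M.Q) → M.Q → Prop
  | q, [], r => M.Reaches q [] [] r
  | q, (a, b, p) :: L, r =>
      ∃ q', M.Reaches q [] [] q' ∧ M.trans q' a b p ∧ ¬(a = none ∧ b = none) ∧
        IsChain M p L r

theorem eps_chain {q q' r : M.Q} (he : M.Reaches q [] [] q')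
    {L : List (Option A × Option B × M.Q)} (hc : IsChain M q' L r) :
    IsChain M q L r := by
  cases L with
  | nil =>
    simp only [IsChain] at hc ⊢
    simpa using reaches_append he hc
  | cons e L =>
    obtain ⟨a, b, p⟩ := e
    obtain ⟨q'', h1, h2, h3, h4⟩ := hc
    exact ⟨q'', by simpa using reaches_append he h1, h2, h3, h4⟩

theorem chain_of_reaches {q r : M.Q} {u : List A} {v : List B} (h : M.Reaches q u v r) :
    ∃ L, IsChain M q L r ∧ flatA L = u ∧ flatB L = v := by
  induction h with
  | refl q => exact ⟨[], AsyncFSA.Reaches.refl q, rfl, rfl⟩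
  | @step p q' r' a b u' v' ht hr ih =>
    obtain ⟨L, hc, hu, hv⟩ := ih
    rcases a with _ | a <;> rcases b with _ | b
    · refine ⟨L, eps_chain ?_ hc, by simpa [hu], by simpa [hv]⟩
      simpa using AsyncFSA.Reaches.step ht (AsyncFSA.Reaches.refl q')
    all_goals
      exact ⟨(_, _, q') :: L, ⟨p, AsyncFSA.Reaches.refl p, ht, by simp, hc⟩,
        by simp [flatA_cons, hu], by simp [flatB_cons, hv]⟩

theorem reaches_of_chain : ∀ {L : List (Option A × Option B × M.Q)} {q r : M.Q},
    IsChain M q L r → M.Reaches q (flatA L) (flatB L) r := by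
  intro L
  induction L with
  | nil => intro q r h; simpa [flatA_nil, flatB_nil, IsChain] using h
  | cons e L ih =>
    obtain ⟨a, b, p⟩ := e
    intro q r h
    obtain ⟨q', h1, h2, _, h4⟩ := h
    have h5 : M.Reaches q' (a.toList ++ flatA L) (b.toList ++ flatB L) r :=
      AsyncFSA.Reaches.step h2 (ih h4)
    rw [flatA_cons, flatB_cons]
    simpa using reaches_append h1 h5

theorem chain_length_le : ∀ {L : List (Option A × Option B × M.Q)} {q r : M.Q},
    IsChain M q L r → L.length ≤ (flatA L).length + (flatB L).length := by
  intro L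
  induction L with
  | nil => intro q r _; simp [flatA_nil, flatB_nil]
  | cons e L ih =>
    obtain ⟨a, b, p⟩ := e
    intro q r h
    obtain ⟨q', _, _, h3, h4⟩ := h
    have := ih h4
    have hab : 1 ≤ a.toList.length + b.toList.length := by
      rcases a with _ | a <;> rcases b with _ | b <;> simp at h3 ⊢
    simp only [flatA_cons, flatB_cons, List.length_append, List.length_cons] at *
    omega

theorem getD_irrel {α : Type*} {l : List α} {k : ℕ} (hk : k < l.length) (d₁ d₂ : α) :
    l.getD k d₁ = l.getD k d₂ := by
  rw [List.getD_eq_getElem _ _ hk, List.getD_eq_getElem _ _ hk]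

/-- The state after the `k`-th unit of a chain started at `q`. -/
def stA {A B Q : Type*} (q : Q) (L : List (Option A × Option B × Q)) (k : ℕ) : Q :=
  (q :: L.map fun e => e.2.2).getD k q

theorem chain_split : ∀ (L : List (Option A × Option B × M.Q)) {q r : M.Q},
    IsChain M q L r → ∀ k, k ≤ L.length →
    IsChain M q (L.take k) (stA q L k) ∧ IsChain M (stA q L k) (L.drop k) r := by
  intro L
  induction L with
  | nil =>
    intro q r h k hk
    simp only [List.length_nil, Nat.le_zero] at hk
    subst hk
    exact ⟨AsyncFSA.Reaches.refl q, h⟩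
  | cons e L ih =>
    obtain ⟨a, b, p⟩ := e
    intro q r h k hk
    cases k with
    | zero => exact ⟨AsyncFSA.Reaches.refl q, h⟩
    | succ k =>
      obtain ⟨q', h1, h2, h3, h4⟩ := h
      have hk' : k ≤ L.length := by simpa using hk
      obtain ⟨hfst, hsnd⟩ := ih h4 k hk'
      have hst : stA q ((a, b, p) :: L) (k + 1) = stA p L k := by
        have hlt : k < (p :: L.map fun e => e.2.2).length := by
          simp only [List.length_cons, List.length_map]
          omega
        simp only [stA, List.map_cons, List.getD_cons_succ]
        exact getD_irrel hlt q p
      rw [hst]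
      exact ⟨⟨q', h1, h2, h3, hfst⟩, hsnd⟩


theorem stA_drop {A B Q : Type*} (q p : Q) (L : List (Option A × Option B × Q))
    (i k : ℕ) (h : i + k ≤ L.length) (hk : 1 ≤ k) :
    stA p (L.drop i) k = stA q L (i + k) := by
  obtain ⟨d, rfl⟩ : ∃ d, k = d + 1 := ⟨k - 1, by omega⟩
  have h1 : d < ((L.map fun e => e.2.2).drop i).length := by simp; omega
  have h2 : i + d < (L.map fun e => e.2.2).length := by simp; omega
  simp only [stA, List.map_drop]
  rw [show i + (d+1) = (i + d) + 1 by omega, List.getD_cons_succ, List.getD_cons_succ,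
    List.getD_eq_getElem _ _ h1, List.getD_eq_getElem _ _ h2, List.getElem_drop]

end WP3

/-- The word problem of the free commutative semigroup on two generators
(pairs of nonempty strings with equal letter counts) is not rational. -/
theorem stmt_3 :
    ¬ IsRationalRel {p : List (Fin 2) × List (Fin 2) |
        p.1 ≠ [] ∧ p.2 ≠ [] ∧ ∀ i : Fin 2, p.1.count i = p.2.count i} := by
  rintro ⟨M, hM⟩
  haveI : Finite M.Q := M.fin
  haveI : Fintype M.Q := Fintype.ofFinite M.Q
  set n := Fintype.card M.Q with hn
  have hn1 : 1 ≤ n := Fintype.card_pos_iff.mpr ⟨M.init⟩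
  set U : List (Fin 2) := List.replicate (2*n) 0 ++ List.replicate (2*n) 1 with hU
  set V : List (Fin 2) := List.replicate (2*n) 1 ++ List.replicate (2*n) 0 with hV
  have hUlen : U.length = 4 * n := by simp [hU]; omega
  have hVlen : V.length = 4 * n := by simp [hV]; omega
  have hmem : (U, V) ∈ {p : List (Fin 2) × List (Fin 2) |
      p.1 ≠ [] ∧ p.2 ≠ [] ∧ ∀ i : Fin 2, p.1.count i = p.2.count i} := by
    refine ⟨?_, ?_, ?_⟩
    · show U ≠ []
      intro h
      have h2 := congrArg List.length h
      rw [hUlen] at h2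
      simp only [List.length_nil] at h2
      omega
    · show V ≠ []
      intro h
      have h2 := congrArg List.length h
      rw [hVlen] at h2
      simp only [List.length_nil] at h2
      omega
    · intro i
      fin_cases i <;>
        simp [hU, hV, List.count_append, List.count_replicate] <;> omega
  obtain ⟨qf, hqf, hrun⟩ := (hM (U, V)).mp hmem
  obtain ⟨L, hc, huL', hvL'⟩ := WP3.chain_of_reaches hrun
  have huL : WP3.flatA L = U := huL'
  have hvL : WP3.flatB L = V := hvL'
  have hLlen : 4 * n ≤ L.length := by
    have := (WP3.flat_length_le L).1
    rw [huL, hUlen] at this; exact this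
  obtain ⟨ii, jj, hij, hjn, hfe⟩ :
      ∃ ii jj : ℕ, ii < jj ∧ jj ≤ n ∧ WP3.stA M.init L ii = WP3.stA M.init L jj := by
    obtain ⟨i, j, hij, hfe⟩ := Fintype.exists_ne_map_eq_of_card_lt
      (fun k : Fin (n+1) => WP3.stA M.init L (k : ℕ)) (by simp [hn])
    have hi := i.isLt
    have hj := j.isLt
    rcases hij.lt_or_gt with h | h
    · exact ⟨i, j, h, by omega, hfe⟩
    · exact ⟨j, i, h, by omega, hfe.symm⟩
  have hjL : jj ≤ L.length := by omega
  have hiL : ii ≤ L.length := by omega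
  -- split the chain at ii and then at jj - ii
  obtain ⟨hc1, hc23⟩ := WP3.chain_split L hc ii hiL
  obtain ⟨hc2, hc3⟩ := WP3.chain_split (L.drop ii) hc23 (jj - ii) (by simp; omega)
  have hst : WP3.stA (WP3.stA M.init L ii) (L.drop ii) (jj - ii) = WP3.stA M.init L ii := by
    rw [WP3.stA_drop M.init _ L ii (jj - ii) (by omega) (by omega),
      show ii + (jj - ii) = jj by omega]
    exact hfe.symm
  rw [hst] at hc2 hc3
  set p₁ := WP3.stA M.init L ii with hp₁
  set L₁ := L.take ii with hL₁
  set L₂ := (L.drop ii).take (jj - ii) with hL₂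
  set L₃ := (L.drop ii).drop (jj - ii) with hL₃
  have hLdec : L = L₁ ++ (L₂ ++ L₃) := by
    rw [hL₁, hL₂, hL₃, List.take_append_drop, List.take_append_drop]
  set x := WP3.flatA L₁ with hx
  set w := WP3.flatA L₂ with hw
  set y := WP3.flatA L₃ with hy
  set s := WP3.flatB L₁ with hs
  set z := WP3.flatB L₂ with hz
  set t := WP3.flatB L₃ with ht
  have hUdec : U = x ++ w ++ y := by
    rw [← huL, hLdec, WP3.flatA_append, WP3.flatA_append, hx, hw, hy, List.append_assoc]
  have hVdec : V = s ++ z ++ t := by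
    rw [← hvL, hLdec, WP3.flatB_append, WP3.flatB_append, hs, hz, ht, List.append_assoc]
  -- the loop consumes at least one symbol
  have hL₂len : L₂.length = jj - ii := by
    rw [hL₂]; simp; omega
  have hwz1 : 1 ≤ w.length + z.length := by
    have := WP3.chain_length_le hc2
    rw [← hw, ← hz, hL₂len] at this
    omega
  -- the loop part lies in the first blocks
  have hxw : x.length + w.length ≤ n := by
    have h1 : x ++ w = WP3.flatA (L₁ ++ L₂) := (WP3.flatA_append L₁ L₂).symm
    have h2 := (WP3.flat_length_le (L₁ ++ L₂)).1
    rw [← h1, List.length_append] at h2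
    have h3 : (L₁ ++ L₂).length = jj := by
      simp [hL₁, hL₂]; omega
    omega
  have hsz : s.length + z.length ≤ n := by
    have h1 : s ++ z = WP3.flatB (L₁ ++ L₂) := (WP3.flatB_append L₁ L₂).symm
    have h2 := (WP3.flat_length_le (L₁ ++ L₂)).2
    rw [← h1, List.length_append] at h2
    have h3 : (L₁ ++ L₂).length = jj := by
      simp [hL₁, hL₂]; omega
    omega
  -- hence w consists of 0s and z consists of 1s
  have hwrep : w = List.replicate w.length 0 := by
    have e1 : U.take (x.length + w.length) = x ++ w := by
      rw [hUdec]
      exact List.take_left' List.length_append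
    have e2 : U.take (x.length + w.length)
        = List.replicate (x.length + w.length) (0 : Fin 2) := by
      rw [hU, List.take_append_of_le_length (by simp only [List.length_replicate]; omega),
        List.take_replicate]
      congr 1
      omega
    have e3 : w = (List.replicate (x.length + w.length) (0 : Fin 2)).drop x.length := by
      rw [← e2, e1, List.drop_left]
    rw [e3, List.drop_replicate, Nat.add_sub_cancel_left]
    simp
  have hzrep : z = List.replicate z.length 1 := by
    have e1 : V.take (s.length + z.length) = s ++ z := by
      rw [hVdec]
      exact List.take_left' List.length_append
    have e2 : V.take (s.length + z.length)
        = List.replicate (s.length + z.length) (1 : Fin 2) := by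
      rw [hV, List.take_append_of_le_length (by simp only [List.length_replicate]; omega),
        List.take_replicate]
      congr 1
      omega
    have e3 : z = (List.replicate (s.length + z.length) (1 : Fin 2)).drop s.length := by
      rw [← e2, e1, List.drop_left]
    rw [e3, List.drop_replicate, Nat.add_sub_cancel_left]
    simp
  -- pump the loop once
  have R1 : M.Reaches M.init x s p₁ := WP3.reaches_of_chain hc1
  have RL : M.Reaches p₁ w z p₁ := WP3.reaches_of_chain hc2
  have R3 : M.Reaches p₁ y t qf := WP3.reaches_of_chain hc3
  have R2 : M.Reaches M.init (x ++ (w ++ (w ++ y))) (s ++ (z ++ (z ++ t))) qf :=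
    WP3.reaches_append R1 (WP3.reaches_append RL (WP3.reaches_append RL R3))
  have hmem2 := (hM (x ++ (w ++ (w ++ y)), s ++ (z ++ (z ++ t)))).mpr ⟨qf, hqf, R2⟩
  obtain ⟨-, -, hcnt⟩ := hmem2
  -- counting contradiction
  have hw0 : w.count 0 = w.length := by
    conv_lhs => rw [hwrep]
    simp [List.count_replicate]
  have hw1 : w.count 1 = 0 := by
    conv_lhs => rw [hwrep]
    simp [List.count_replicate]
  have hz0 : z.count 0 = 0 := by
    conv_lhs => rw [hzrep]
    simp [List.count_replicate]
  have hz1 : z.count 1 = z.length := by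
    conv_lhs => rw [hzrep]
    simp [List.count_replicate]
  have hU0 : x.count 0 + (w.count 0 + y.count 0) = 2 * n := by
    have : U.count 0 = 2 * n := by
      simp [hU, List.count_append, List.count_replicate]
    rw [hUdec] at this
    simpa [List.count_append] using this
  have hU1 : x.count 1 + (w.count 1 + y.count 1) = 2 * n := by
    have : U.count 1 = 2 * n := by
      simp [hU, List.count_append, List.count_replicate]
    rw [hUdec] at this
    simpa [List.count_append] using this
  have hV0 : s.count 0 + (z.count 0 + t.count 0) = 2 * n := by
    have : V.count 0 = 2 * n := by
      simp [hV, List.count_append, List.count_replicate]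
    rw [hVdec] at this
    simpa [List.count_append] using this
  have hV1 : s.count 1 + (z.count 1 + t.count 1) = 2 * n := by
    have : V.count 1 = 2 * n := by
      simp [hV, List.count_append, List.count_replicate]
    rw [hVdec] at this
    simpa [List.count_append] using this
  have hc0 := hcnt 0
  have hc1' := hcnt 1
  simp only [List.count_append] at hc0 hc1'
  omega
end

section
/- The word problem of the bicyclic monoid B = Mon⟨b,c | bc = 1⟩ with respect to {b,c} is not a rational relation. -/
/-- The defining relation `bc = 1` of the bicyclic monoid, with `false` as `b`
and `true` as `c`. -/
def bicyclicRel : FreeMonoid Bool → FreeMonoid Bool → Prop := fun x y =>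
  x = FreeMonoid.of false * FreeMonoid.of true ∧ y = 1

section Aux

noncomputable def phiB : FreeMonoid Bool →* Function.End ℕ :=
  FreeMonoid.lift (fun x => if x then Nat.succ else (· - 1))

lemma phiB_congr {u v : FreeMonoid Bool} (h : conGen bicyclicRel u v) :
    phiB u = phiB v := by
  have hle : conGen bicyclicRel ≤ Con.ker phiB := by
    apply Con.conGen_le.mpr
    rintro x y ⟨hx, hy⟩
    subst hx; subst hy
    show phiB _ = phiB _
    rw [map_mul, map_one]
    funext k
    show ((k + 1) - 1 : ℕ) = k
    simp [phiB]
  exact hle h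

lemma phiB_true (n k : ℕ) :
    phiB (FreeMonoid.ofList (List.replicate n true)) k = k + n := by
  induction n generalizing k with
  | zero => rfl
  | succ n ih =>
    rw [List.replicate_succ, FreeMonoid.ofList_cons, map_mul]
    show phiB (FreeMonoid.of true) (phiB (FreeMonoid.ofList (List.replicate n true)) k)
      = k + (n + 1)
    rw [ih]
    show ((k + n) + 1 : ℕ) = k + (n + 1)
    omega

lemma phiB_false (n k : ℕ) :
    phiB (FreeMonoid.ofList (List.replicate n false)) k = k - n := by
  induction n generalizing k with
  | zero => rfl
  | succ n ih =>
    rw [List.replicate_succ, FreeMonoid.ofList_cons, map_mul]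
    show phiB (FreeMonoid.of false) (phiB (FreeMonoid.ofList (List.replicate n false)) k)
      = k - (n + 1)
    rw [ih]
    show ((k - n) - 1 : ℕ) = k - (n + 1)
    omega

lemma bicyclic_bn_cn (n : ℕ) :
    conGen bicyclicRel
      (FreeMonoid.ofList (List.replicate n false ++ List.replicate n true))
      (FreeMonoid.ofList []) := by
  induction n with
  | zero => exact (conGen bicyclicRel).refl _
  | succ n ih =>
    have hbc : conGen bicyclicRel (FreeMonoid.of false * FreeMonoid.of true) 1 :=
      ConGen.Rel.of _ _ ⟨rfl, rfl⟩
    have hlist : List.replicate (n+1) false ++ List.replicate (n+1) true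
        = false :: ((List.replicate n false ++ List.replicate n true) ++ [true]) := by
      rw [List.replicate_succ, List.replicate_succ' (n := n)]
      simp
    rw [hlist]
    have h1 : conGen bicyclicRel
        (FreeMonoid.ofList (false :: ((List.replicate n false ++ List.replicate n true) ++ [true])))
        (FreeMonoid.of false * (1 * FreeMonoid.of true)) := by
      rw [FreeMonoid.ofList_cons, FreeMonoid.ofList_append, FreeMonoid.ofList_singleton]
      exact (conGen bicyclicRel).mul ((conGen bicyclicRel).refl _)
        ((conGen bicyclicRel).mul ih ((conGen bicyclicRel).refl _))
    have h2 : FreeMonoid.of false * (1 * FreeMonoid.of true)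
        = FreeMonoid.of false * FreeMonoid.of true := by rw [one_mul]
    rw [h2] at h1
    exact (conGen bicyclicRel).trans h1 hbc

variable {M : AsyncFSA Bool Bool}

lemma reaches_split {p r : M.Q} {w : List Bool} {vv : List Bool}
    (h : M.Reaches p w vv r) (hv : vv = []) :
    ∀ u v : List Bool, w = u ++ v →
      ∃ q, M.Reaches p u [] q ∧ M.Reaches q v [] r := by
  induction h with
  | refl q =>
    intro u v huv
    obtain ⟨hu, hv'⟩ := List.append_eq_nil_iff.mp huv.symm
    subst hu; subst hv'
    exact ⟨q, AsyncFSA.Reaches.refl q, AsyncFSA.Reaches.refl q⟩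
  | @step p q r a b u v ht hr ih =>
    have hb : b = none := by
      cases b with
      | none => rfl
      | some x => simp at hv
    subst hb
    simp only [Option.toList, List.nil_append] at hv ⊢
    intro u' v' huv
    cases a with
    | none =>
      simp only [Option.toList, List.nil_append] at huv
      obtain ⟨q', h1, h2⟩ := ih hv u' v' huv
      refine ⟨q', ?_, h2⟩
      have := AsyncFSA.Reaches.step (a := none) (b := none) ht h1
      simpa using this
    | some x =>
      simp only [Option.toList] at huv
      cases u' with
      | nil =>
        refine ⟨p, AsyncFSA.Reaches.refl p, ?_⟩
        have h2 : M.Reaches q u [] r := hv ▸ hr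
        have := AsyncFSA.Reaches.step (a := some x) (b := none) ht h2
        rw [List.nil_append] at huv
        exact huv ▸ (by simpa using this)
      | cons y u'' =>
        simp only [List.cons_append, List.cons.injEq] at huv
        obtain ⟨hxy, huv2⟩ := huv
        obtain ⟨q', h1, h2⟩ := ih hv u'' v' huv2
        refine ⟨q', ?_, h2⟩
        have := AsyncFSA.Reaches.step (a := some x) (b := none) ht h1
        simpa [hxy] using this

lemma reaches_trans {p q r : M.Q} {u v : List Bool}
    (h1 : M.Reaches p u [] q) (h2 : M.Reaches q v [] r) :
    M.Reaches p (u ++ v) [] r := by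
  generalize hvv : ([] : List Bool) = vv at h1
  induction h1 with
  | refl s => exact h2
  | @step p' q' r' a b u' v' ht hr ih =>
    have hb : b = none := by
      cases b with
      | none => rfl
      | some x => simp at hvv
    subst hb
    simp only [Option.toList, List.nil_append] at hvv ⊢
    have := AsyncFSA.Reaches.step (a := a) (b := none) ht (ih h2 hvv)
    simp only [List.append_assoc] at this ⊢
    exact this

end Aux


/-- The word problem of the bicyclic monoid `Mon⟨b,c | bc = 1⟩` is not
rational. -/
theorem stmt_4 :
    ¬ IsRationalRel {p : List Bool × List Bool |
        conGen bicyclicRel (FreeMonoid.ofList p.1) (FreeMonoid.ofList p.2)} := by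
  rintro ⟨M, hM⟩
  haveI := M.fin
  -- for each n, the pair (b^n c^n, []) is accepted
  have hacc : ∀ n : ℕ, ∃ q f, M.Reaches M.init (List.replicate n false) [] q ∧
      M.Reaches q (List.replicate n true) [] f ∧ f ∈ M.accept := by
    intro n
    have hmem : (List.replicate n false ++ List.replicate n true, ([] : List Bool)) ∈
        {p : List Bool × List Bool |
          conGen bicyclicRel (FreeMonoid.ofList p.1) (FreeMonoid.ofList p.2)} :=
      bicyclic_bn_cn n
    obtain ⟨f, hf, hre⟩ := (hM _).mp hmem
    obtain ⟨q, h1, h2⟩ := reaches_split hre rfl (List.replicate n false)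
      (List.replicate n true) rfl
    exact ⟨q, f, h1, h2, hf⟩
  choose g f h1 h2 h3 using hacc
  obtain ⟨m, n, hmn, hg⟩ := Finite.exists_ne_map_eq_of_infinite g
  -- then (b^m c^n, []) is accepted, hence b^m c^n = 1 in the bicyclic monoid
  have hre : M.Reaches M.init (List.replicate m false ++ List.replicate n true) [] (f n) :=
    reaches_trans (h1 m) (hg ▸ h2 n)
  have hmem : (List.replicate m false ++ List.replicate n true, ([] : List Bool)) ∈
      {p : List Bool × List Bool |
        conGen bicyclicRel (FreeMonoid.ofList p.1) (FreeMonoid.ofList p.2)} :=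
    (hM _).mpr ⟨f n, h3 n, hre⟩
  have hphi := phiB_congr hmem
  have := congrFun (congrArg (fun (g : Function.End ℕ) => (g : ℕ → ℕ)) hphi) m
  rw [FreeMonoid.ofList_append, map_mul] at this
  have heval : phiB (FreeMonoid.ofList (List.replicate m false))
      (phiB (FreeMonoid.ofList (List.replicate n true)) m) = m := this
  rw [phiB_true, phiB_false] at heval
  omega
end

section
/- Let S be a semigroup generated by a finite set A, let b ∈ S \ A and B = A ∪ {b}, and choose w ∈ A⁺ with w̄ = b. Let Φ : B⁺ → A⁺ replace each occurrence of b by w, with graph R and reversed graph R^r. Then SWP(S,B) = R ∘ SWP(S,A) ∘ R^r; in particular, if SWP(S,A) is rational then so is SWP(S,B). -/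
open Classical in
/-- Substitution on words over `insert b A` replacing the letter `b` by the
word `w` over `A` and fixing all letters of `A`. -/
noncomputable def substGen {S : Type*} [Semigroup S] (A : Set S) (b : S)
    (w : List ↥A) : List ↥(insert b A) → List ↥A :=
  fun l => l.foldr (fun x acc =>
    if h : (x : S) ∈ A then ⟨(x : S), h⟩ :: acc else w ++ acc) []

/-- Composition of relations on strings. -/
def relComp {α β γ : Type*} (R : Set (List α × List β))
    (S : Set (List β × List γ)) : Set (List α × List γ) :=
  {p | ∃ x, (p.1, x) ∈ R ∧ (x, p.2) ∈ S}

namespace Stmt6Aux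

variable {S : Type*} [Semigroup S]

/-- Multiplication on `Option S` with `none` as unit. -/
def omul : Option S → Option S → Option S
  | none, y => y
  | some a, none => some a
  | some a, some c => some (a * c)

@[simp] lemma omul_none (x : Option S) : omul x none = x := by cases x <;> rfl
@[simp] lemma none_omul (x : Option S) : omul none x = x := rfl

lemma omul_assoc (x y z : Option S) : omul (omul x y) z = omul x (omul y z) := by
  cases x <;> cases y <;> cases z <;> simp [omul, mul_assoc]

variable {α : Type*} (f : α → S)

lemma foldl_eq (s : S) (l : List α) :
    (some (l.foldl (fun s x => s * f x) s) : Option S) = omul (some s) (evalWord f l) := by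
  induction l generalizing s with
  | nil => rfl
  | cons x t ih =>
    have h2 : evalWord f (x :: t) = omul (some (f x)) (evalWord f t) := ih (f x)
    show some (List.foldl (fun s x => s * f x) (s * f x) t) = omul (some s) (evalWord f (x :: t))
    rw [ih, h2, ← omul_assoc]
    rfl

lemma evalWord_cons (x : α) (t : List α) :
    evalWord f (x :: t) = omul (some (f x)) (evalWord f t) := foldl_eq f (f x) t

@[simp] lemma evalWord_nil : evalWord f ([] : List α) = none := rfl

lemma evalWord_append (l1 l2 : List α) :
    evalWord f (l1 ++ l2) = omul (evalWord f l1) (evalWord f l2) := by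
  cases l1 with
  | nil => simp
  | cons x t =>
    show some (List.foldl (fun s x => s * f x) (f x) (t ++ l2)) = _
    rw [List.foldl_append, foldl_eq]
    rfl

end Stmt6Aux
namespace Stmt6Aux

open Classical in
/-- Expansion of a single letter of `insert b A`. -/
noncomputable def expandGen {S : Type*} [Semigroup S] (A : Set S) (b : S)
    (w : List ↥A) (x : ↥(insert b A)) : List ↥A :=
  if h : (x : S) ∈ A then [⟨(x : S), h⟩] else w

variable {S : Type*} [Semigroup S] {A : Set S} {b : S} {w : List ↥A}

lemma substGen_nil : substGen A b w [] = [] := rfl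

lemma substGen_cons (x : ↥(insert b A)) (l : List ↥(insert b A)) :
    substGen A b w (x :: l) = expandGen A b w x ++ substGen A b w l := by
  by_cases h : (x : S) ∈ A <;> simp [substGen, expandGen, h]

lemma expandGen_ne_nil (hw : w ≠ []) (x : ↥(insert b A)) : expandGen A b w x ≠ [] := by
  unfold expandGen; split
  · simp
  · exact hw

lemma expandGen_length (hw : w ≠ []) (x : ↥(insert b A)) :
    (expandGen A b w x).length ≤ w.length := by
  unfold expandGen; split
  · exact List.length_pos_iff.2 hw
  · exact le_rfl

lemma eval_expandGen (hb : b ∉ A) (hwb : evalWord Subtype.val w = some b)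
    (x : ↥(insert b A)) :
    evalWord Subtype.val (expandGen A b w x) = some (x : S) := by
  unfold expandGen; split
  · rfl
  · rename_i h
    rw [hwb]
    rcases x.2 with h' | h'
    · rw [h']
    · exact absurd h' h

lemma eval_substGen (hb : b ∉ A) (hwb : evalWord Subtype.val w = some b)
    (l : List ↥(insert b A)) :
    evalWord Subtype.val (substGen A b w l) = evalWord Subtype.val l := by
  induction l with
  | nil => rfl
  | cons x t ih =>
    rw [substGen_cons, evalWord_append, eval_expandGen hb hwb, ih, ← evalWord_cons]

lemma substGen_eq_nil_iff (hw : w ≠ []) {l : List ↥(insert b A)} :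
    substGen A b w l = [] ↔ l = [] := by
  cases l with
  | nil => simp [substGen_nil]
  | cons x t =>
    simp [substGen_cons, List.append_eq_nil_iff, expandGen_ne_nil hw x]

end Stmt6Aux
namespace Stmt6Aux

/-- Buffers: lists over `Fin k` of length at most `N`. -/
def Buf (k N : ℕ) : Type := {l : List (Fin k) // l.length ≤ N}

instance (k N : ℕ) : Finite (Buf k N) := (List.finite_length_le (Fin k) N).to_subtype

/-- The empty buffer. -/
def Buf.nil (k N : ℕ) : Buf k N := ⟨[], Nat.zero_le N⟩

theorem AsyncFSA.Reaches.trans {A B : Type*} {M : AsyncFSA A B} {p q r : M.Q}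
    {u u' : List A} {v v' : List B} (h1 : M.Reaches p u v q) (h2 : M.Reaches q u' v' r) :
    M.Reaches p (u ++ u') (v ++ v') r := by
  induction h1 generalizing u' v' with
  | refl => simpa
  | step ht _ ih =>
    simpa [List.append_assoc] using AsyncFSA.Reaches.step ht (ih h2)

section Aut

variable {S : Type*} [Semigroup S] (A : Set S) (b : S) (w : List ↥A)
  {k : ℕ} (e : ↥A ≃ Fin k) (M : AsyncFSA ↥A ↥A)

/-- The simulating automaton over the enlarged alphabet. -/
noncomputable def bigAut : AsyncFSA ↥(insert b A) ↥(insert b A) where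
  Q := M.Q × Buf k w.length × Buf k w.length
  fin := by have := M.fin; infer_instance
  init := (M.init, Buf.nil k w.length, Buf.nil k w.length)
  accept := {q | q.1 ∈ M.accept ∧ q.2.1.1 = [] ∧ q.2.2.1 = []}
  trans := fun p oa ob p' =>
    (∃ c, oa = some c ∧ ob = none ∧ p.2.1.1 = [] ∧
      p'.2.1.1 = (expandGen A b w c).map e ∧ p'.2.2 = p.2.2 ∧ p'.1 = p.1) ∨
    (∃ d, ob = some d ∧ oa = none ∧ p.2.2.1 = [] ∧
      p'.2.2.1 = (expandGen A b w d).map e ∧ p'.2.1 = p.2.1 ∧ p'.1 = p.1) ∨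
    (oa = none ∧ ob = none ∧ ∃ a b', M.trans p.1 a b' p'.1 ∧
      p.2.1.1 = (a.map e).toList ++ p'.2.1.1 ∧ p.2.2.1 = (b'.map e).toList ++ p'.2.2.1)

variable {A b w M}

/-- Backward simulation: a run of `bigAut` ending with empty buffers yields a
run of `M` on the substituted words. -/
lemma bigAut_to {p r : (bigAut A b w e M).Q} {u v : List ↥(insert b A)}
    (h : (bigAut A b w e M).Reaches p u v r) (h1 : r.2.1.1 = []) (h2 : r.2.2.1 = []) :
    M.Reaches p.1 (p.2.1.1.map e.symm ++ substGen A b w u)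
      (p.2.2.1.map e.symm ++ substGen A b w v) r.1 := by
  induction h with
  | refl q => rw [h1, h2]; simpa [substGen_nil] using AsyncFSA.Reaches.refl q.1
  | @step p q r' oa ob u' v' ht hr ih =>
    specialize ih h1 h2
    rcases ht with ⟨c, hoa, hob, hp1, hq1, hq2, hq⟩ | ⟨d, hob, hoa, hp2, hq2, hq1, hq⟩ |
      ⟨hoa, hob, a, b', htr, hsp1, hsp2⟩
    · subst hoa hob
      rw [hq, hq2] at ih
      rw [hq1] at ih
      simp only [List.map_map, Equiv.symm_comp_self, List.map_id] at ih
      simpa [hp1, substGen_cons] using ih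
    · subst hoa hob
      rw [hq, hq1] at ih
      rw [hq2] at ih
      simp only [List.map_map, Equiv.symm_comp_self, List.map_id] at ih
      simpa [hp2, substGen_cons] using ih
    · subst hoa hob
      simp only [Option.toList_none, List.nil_append]
      rw [hsp1, hsp2]
      have e1 : ((Option.map e a).toList ++ q.2.1.1).map e.symm ++ substGen A b w u' =
          a.toList ++ (q.2.1.1.map e.symm ++ substGen A b w u') := by
        cases a <;> simp
      have e2 : ((Option.map e b').toList ++ q.2.2.1).map e.symm ++ substGen A b w v' =
          b'.toList ++ (q.2.2.1.map e.symm ++ substGen A b w v') := by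
        cases b' <;> simp
      rw [e1, e2]
      exact AsyncFSA.Reaches.step htr ih

end Aut

end Stmt6Aux
namespace Stmt6Aux

section Aut2

variable {S : Type*} [Semigroup S] {A : Set S} {b : S} {w : List ↥A}
  {k : ℕ} (e : ↥A ≃ Fin k) {M : AsyncFSA ↥A ↥A}

lemma ready1 (hw : w ≠ []) (p : (bigAut A b w e M).Q) (u : List ↥(insert b A))
    (a : Option ↥A) (α' : List ↥A)
    (h : p.2.1.1.map e.symm ++ substGen A b w u = a.toList ++ α') :
    ∃ (pre u' : List ↥(insert b A)) (β β' : Buf k w.length),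
      u = pre ++ u' ∧
      (bigAut A b w e M).Reaches p pre [] (p.1, β, p.2.2) ∧
      β.1.map e.symm = a.toList ++ β'.1.map e.symm ∧
      β'.1.map e.symm ++ substGen A b w u' = α' := by
  cases a with
  | none =>
    refine ⟨[], u, p.2.1, p.2.1, rfl, ?_, by simp, by simpa using h⟩
    have : p = (p.1, p.2.1, p.2.2) := rfl
    exact this ▸ AsyncFSA.Reaches.refl p
  | some x =>
    rcases hp : p.2.1.1 with _ | ⟨y, t⟩
    · -- buffer empty: must load a letter
      rw [hp] at h
      simp only [List.map_nil, List.nil_append, Option.toList_some] at h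
      cases u with
      | nil => simp [substGen_nil] at h
      | cons c u' =>
        rw [substGen_cons] at h
        rcases hexp : expandGen A b w c with _ | ⟨y, t⟩
        · exact absurd hexp (expandGen_ne_nil hw c)
        · rw [hexp] at h
          simp only [List.cons_append, List.cons.injEq] at h
          obtain ⟨hyx, hα⟩ := h
          have hlen : (expandGen A b w c).length ≤ w.length := expandGen_length hw c
          have hlt : t.length ≤ w.length := by
            rw [hexp] at hlen; simpa using Nat.le_of_succ_le hlen
          refine ⟨[c], u', ⟨(expandGen A b w c).map e, by simpa using hlen⟩,
            ⟨t.map e, by simpa using hlt⟩, rfl, ?_, ?_, ?_⟩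
          · have ht : (bigAut A b w e M).trans p (some c) none
                (p.1, ⟨(expandGen A b w c).map e, by simpa using hlen⟩, p.2.2) :=
              Or.inl ⟨c, rfl, rfl, hp, rfl, rfl, rfl⟩
            simpa using AsyncFSA.Reaches.step ht (AsyncFSA.Reaches.refl _)
          · simp [hexp, List.map_map, hyx]
          · simpa [List.map_map] using hα
    · -- buffer nonempty
      rw [hp] at h
      simp only [List.map_cons, List.cons_append, Option.toList_some,
        List.cons.injEq] at h
      obtain ⟨hyx, hα⟩ := h
      have hlt : t.length ≤ w.length := by
        have := p.2.1.2; rw [hp] at this; exact Nat.le_of_succ_le this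
      refine ⟨[], u, p.2.1, ⟨t, hlt⟩, rfl, ?_, ?_, hα⟩
      · have : p = (p.1, p.2.1, p.2.2) := rfl
        exact this ▸ AsyncFSA.Reaches.refl p
      · simp [hp, hyx]

lemma ready2 (hw : w ≠ []) (p : (bigAut A b w e M).Q) (v : List ↥(insert b A))
    (a : Option ↥A) (α' : List ↥A)
    (h : p.2.2.1.map e.symm ++ substGen A b w v = a.toList ++ α') :
    ∃ (pre v' : List ↥(insert b A)) (β β' : Buf k w.length),
      v = pre ++ v' ∧
      (bigAut A b w e M).Reaches p [] pre (p.1, p.2.1, β) ∧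
      β.1.map e.symm = a.toList ++ β'.1.map e.symm ∧
      β'.1.map e.symm ++ substGen A b w v' = α' := by
  cases a with
  | none =>
    refine ⟨[], v, p.2.2, p.2.2, rfl, ?_, by simp, by simpa using h⟩
    have : p = (p.1, p.2.1, p.2.2) := rfl
    exact this ▸ AsyncFSA.Reaches.refl p
  | some x =>
    rcases hp : p.2.2.1 with _ | ⟨y, t⟩
    · rw [hp] at h
      simp only [List.map_nil, List.nil_append, Option.toList_some] at h
      cases v with
      | nil => simp [substGen_nil] at h
      | cons c v' =>
        rw [substGen_cons] at h
        rcases hexp : expandGen A b w c with _ | ⟨y, t⟩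
        · exact absurd hexp (expandGen_ne_nil hw c)
        · rw [hexp] at h
          simp only [List.cons_append, List.cons.injEq] at h
          obtain ⟨hyx, hα⟩ := h
          have hlen : (expandGen A b w c).length ≤ w.length := expandGen_length hw c
          have hlt : t.length ≤ w.length := by
            rw [hexp] at hlen; simpa using Nat.le_of_succ_le hlen
          refine ⟨[c], v', ⟨(expandGen A b w c).map e, by simpa using hlen⟩,
            ⟨t.map e, by simpa using hlt⟩, rfl, ?_, ?_, ?_⟩
          · have ht : (bigAut A b w e M).trans p none (some c)
                (p.1, p.2.1, ⟨(expandGen A b w c).map e, by simpa using hlen⟩) :=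
              Or.inr (Or.inl ⟨c, rfl, rfl, hp, rfl, rfl, rfl⟩)
            simpa using AsyncFSA.Reaches.step ht (AsyncFSA.Reaches.refl _)
          · simp [hexp, List.map_map, hyx]
          · simpa [List.map_map] using hα
    · rw [hp] at h
      simp only [List.map_cons, List.cons_append, Option.toList_some,
        List.cons.injEq] at h
      obtain ⟨hyx, hα⟩ := h
      have hlt : t.length ≤ w.length := by
        have := p.2.2.2; rw [hp] at this; exact Nat.le_of_succ_le this
      refine ⟨[], v, p.2.2, ⟨t, hlt⟩, rfl, ?_, ?_, hα⟩
      · have : p = (p.1, p.2.1, p.2.2) := rfl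
        exact this ▸ AsyncFSA.Reaches.refl p
      · simp [hp, hyx]

end Aut2

end Stmt6Aux
namespace Stmt6Aux

section Aut3

variable {S : Type*} [Semigroup S] {A : Set S} {b : S} {w : List ↥A}
  {k : ℕ} (e : ↥A ≃ Fin k) {M : AsyncFSA ↥A ↥A}

lemma bigAut_from (hw : w ≠ []) {qq r : M.Q} {α β : List ↥A}
    (h : M.Reaches qq α β r) (β₁ β₂ : Buf k w.length) (u v : List ↥(insert b A))
    (h1 : β₁.1.map e.symm ++ substGen A b w u = α)
    (h2 : β₂.1.map e.symm ++ substGen A b w v = β) :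
    (bigAut A b w e M).Reaches (qq, β₁, β₂) u v
      (r, Buf.nil k w.length, Buf.nil k w.length) := by
  induction h generalizing β₁ β₂ u v with
  | refl q =>
    rw [List.append_eq_nil_iff] at h1 h2
    obtain ⟨hb1, hu⟩ := h1
    obtain ⟨hb2, hv⟩ := h2
    rw [substGen_eq_nil_iff hw] at hu hv
    subst hu hv
    have eb1 : β₁ = Buf.nil k w.length := Subtype.ext (by simpa [Buf.nil] using hb1)
    have eb2 : β₂ = Buf.nil k w.length := Subtype.ext (by simpa [Buf.nil] using hb2)
    rw [eb1, eb2]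
    exact AsyncFSA.Reaches.refl _
  | @step p q r' a b' α' β' htr hrest ih =>
    obtain ⟨pre1, u1, γ, γ', hu, R1, hγ, hγ'⟩ :=
      ready1 e hw (p, β₁, β₂) u a α' h1
    obtain ⟨pre2, v1, δ, δ', hv, R2, hδ, hδ'⟩ :=
      ready2 e hw (p, γ, β₂) v b' β' h2
    have hsim : (bigAut A b w e M).trans (p, γ, δ) none none (q, γ', δ') := by
      refine Or.inr (Or.inr ⟨rfl, rfl, a, b', htr, ?_, ?_⟩)
      · have := congrArg (List.map e) hγ
        have ha : (Option.map (⇑e) a).toList = List.map (⇑e) a.toList := by cases a <;> rfl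
        rw [ha]
        simpa [List.map_map, List.map_append, Equiv.self_comp_symm] using this
      · have := congrArg (List.map e) hδ
        have hbb : (Option.map (⇑e) b').toList = List.map (⇑e) b'.toList := by cases b' <;> rfl
        rw [hbb]
        simpa [List.map_map, List.map_append, Equiv.self_comp_symm] using this
    have R3 : (bigAut A b w e M).Reaches (q, γ', δ') u1 v1
        (r', Buf.nil k w.length, Buf.nil k w.length) := ih γ' δ' u1 v1 hγ' hδ'
    have R4 := AsyncFSA.Reaches.step hsim R3
    have R5 := AsyncFSA.Reaches.trans R2 R4
    have R6 := AsyncFSA.Reaches.trans R1 R5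
    simpa [hu, hv] using R6

end Aut3

end Stmt6Aux
namespace Stmt6Aux

section Aut4

variable {S : Type*} [Semigroup S] {A : Set S} {b : S} {w : List ↥A}
  {k : ℕ} (e : ↥A ≃ Fin k) {M : AsyncFSA ↥A ↥A}

lemma bigAut_accepts (hw : w ≠ []) (u v : List ↥(insert b A)) :
    (bigAut A b w e M).Accepts u v ↔
      M.Accepts (substGen A b w u) (substGen A b w v) := by
  constructor
  · rintro ⟨q, ⟨hq1, hq2, hq3⟩, reach⟩
    refine ⟨q.1, hq1, ?_⟩
    have := bigAut_to e reach hq2 hq3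
    simpa [bigAut, Buf.nil] using this
  · rintro ⟨q, hq, reach⟩
    refine ⟨(q, Buf.nil k w.length, Buf.nil k w.length), ⟨hq, rfl, rfl⟩, ?_⟩
    exact bigAut_from e hw reach (Buf.nil k w.length) (Buf.nil k w.length) u v
      (by simp [Buf.nil]) (by simp [Buf.nil])

lemma swp_insert_iff (hw : w ≠ []) (hb : b ∉ A)
    (hwb : evalWord Subtype.val w = some b) (u v : List ↥(insert b A)) :
    (u, v) ∈ SWP (insert b A) ↔ (substGen A b w u, substGen A b w v) ∈ SWP A := by
  simp [SWP, substGen_eq_nil_iff hw, eval_substGen hb hwb]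

end Aut4

end Stmt6Aux
open Stmt6Aux in
/-- `SWP(S,B) = R ∘ SWP(S,A) ∘ Rʳ` for `B = A ∪ {b}`, and hence rationality of
`SWP(S,A)` implies rationality of `SWP(S,B)`. -/
theorem stmt_6 {S : Type*} [Semigroup S] (A : Set S) (hA : A.Finite)
    (hgen : Subsemigroup.closure A = ⊤) (b : S) (hb : b ∉ A)
    (w : List ↥A) (hw : w ≠ []) (hwb : evalWord Subtype.val w = some b) :
    SWP (insert b A) =
      relComp (relComp
        {p : List ↥(insert b A) × List ↥A | p.2 = substGen A b w p.1}
        (SWP A))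
        {p : List ↥A × List ↥(insert b A) | p.1 = substGen A b w p.2} ∧
    (IsRationalRel (SWP A) → IsRationalRel (SWP (insert b A))) := by
  constructor
  · ext ⟨u, v⟩
    rw [swp_insert_iff hw hb hwb]
    constructor
    · intro h
      exact ⟨substGen A b w v, ⟨substGen A b w u, rfl, h⟩, rfl⟩
    · rintro ⟨x, ⟨y, hy, hS⟩, hx⟩
      simp only [Set.mem_setOf_eq] at hy hx
      subst hy hx
      exact hS
  · rintro ⟨M, hM⟩
    haveI := hA.fintype
    let e : ↥A ≃ Fin (Fintype.card ↥A) := Fintype.equivFin ↥A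
    refine ⟨bigAut A b w e M, ?_⟩
    rintro ⟨u, v⟩
    rw [show ((u, v) ∈ SWP (insert b A)) ↔ _ from swp_insert_iff hw hb hwb u v,
      hM (substGen A b w u, substGen A b w v)]
    exact (bigAut_accepts e hw u v).symm
end

section
/- Let S be a semigroup with a finite generating set A such that SWP(S,A) is rational, and let c ∈ A. Then the subsemigroup S' generated by C = A \ {c} has rational word problem SWP(S',C). -/
/-- Removing a generator preserves rational word problem: the subsemigroup
generated by `A \ {c}` has rational word problem. -/
theorem stmt_7 {S : Type*} [Semigroup S] (A : Set S) (hA : A.Finite)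
    (hgen : Subsemigroup.closure A = ⊤) (hrat : IsRationalRel (SWP A))
    (c : S) (hc : c ∈ A) :
    IsRationalRel (SWP (A \ {c})) := by
  obtain ⟨M, hM⟩ := hrat
  haveI := M.fin
  let ι : ↥(A \ {c}) → ↥A := fun x => ⟨x.1, x.2.1⟩
  let M' : AsyncFSA ↥(A \ {c}) ↥(A \ {c}) :=
    { Q := M.Q, init := M.init, accept := M.accept,
      trans := fun p a b q => M.trans p (a.map ι) (b.map ι) q }
  have hsplit : ∀ (a : Option ↥A) (u₂ : List ↥A) (u : List ↥(A \ {c})),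
      a.toList ++ u₂ = u.map ι →
      ∃ (a' : Option ↥(A \ {c})) (u₁ : List ↥(A \ {c})),
        a = a'.map ι ∧ u₂ = u₁.map ι ∧ u = a'.toList ++ u₁ := by
    intro a u₂ u h
    cases a with
    | none => exact ⟨none, u, rfl, h.symm ▸ rfl, by simp [h.symm]⟩
    | some x =>
      cases u with
      | nil => simp at h
      | cons y t =>
        simp only [Option.toList, List.map, List.cons_append, List.nil_append,
          List.cons.injEq] at h
        exact ⟨some y, t, by simp [h.1], h.2, rfl⟩
  have fwd : ∀ q u v r, M'.Reaches q u v r → M.Reaches q (u.map ι) (v.map ι) r := by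
    intro q u v r h
    induction h with
    | refl q => exact AsyncFSA.Reaches.refl (M := M) q
    | step ht _ ih =>
      rw [List.map_append, List.map_append]
      have : ∀ (a : Option ↥(A \ {c})), a.toList.map ι = (a.map ι).toList := by
        intro a; cases a <;> rfl
      rw [this, this]
      exact AsyncFSA.Reaches.step ht ih
  have bwd : ∀ q u' v' r, M.Reaches q u' v' r → ∀ u v, u' = u.map ι → v' = v.map ι →
      M'.Reaches q u v r := by
    intro q u' v' r h
    induction h with
    | refl q =>
      intro u v hu hv
      obtain rfl : u = [] := by simpa using hu.symm
      obtain rfl : v = [] := by simpa using hv.symm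
      exact AsyncFSA.Reaches.refl (M := M') q
    | step ht _ ih =>
      intro u v hu hv
      obtain ⟨a', u₁, rfl, hu2, rfl⟩ := hsplit _ _ _ hu
      obtain ⟨b', v₁, rfl, hv2, rfl⟩ := hsplit _ _ _ hv
      exact AsyncFSA.Reaches.step (M := M') ht (ih _ _ hu2 hv2)
  have heval : ∀ u : List ↥(A \ {c}),
      evalWord Subtype.val (u.map ι) = evalWord Subtype.val u := by
    intro u
    cases u with
    | nil => rfl
    | cons a t =>
      simp only [evalWord, List.map, List.foldl_map]
      rfl
  refine ⟨M', fun p => ?_⟩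
  have key := hM (p.1.map ι, p.2.map ι)
  simp only [SWP, Set.mem_setOf_eq, heval, ne_eq, List.map_eq_nil_iff] at key ⊢
  rw [key]
  constructor
  · rintro ⟨q, hq, hr⟩
    exact ⟨q, hq, bwd _ _ _ _ hr _ _ rfl rfl⟩
  · rintro ⟨q, hq, hr⟩
    exact ⟨q, hq, fwd _ _ _ _ hr⟩
end

section
/- Let S be a semigroup. If there exists one finite generating set A for S such that SWP(S,A) is rational, then for every finite generating set B of S, the relation SWP(S,B) is rational. -/
section Part1
namespace WPAux

/-! ### Partial products and `evalWord` -/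

variable {S : Type*} [Semigroup S]

def omul : Option S → Option S → Option S
  | none, y => y
  | some a, none => some a
  | some a, some b => some (a * b)

lemma foldl_mul_assoc {α : Type*} (f : α → S) :
    ∀ (t : List α) (x y : S),
      x * t.foldl (fun s a => s * f a) y = t.foldl (fun s a => s * f a) (x * y)
  | [], _, _ => rfl
  | c :: t, x, y => by
      simp only [List.foldl_cons]
      rw [foldl_mul_assoc f t x (y * f c), mul_assoc]

lemma evalWord_append {α : Type*} (f : α → S) (l₁ l₂ : List α) :
    evalWord f (l₁ ++ l₂) = omul (evalWord f l₁) (evalWord f l₂) := by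
  cases l₁ with
  | nil => rfl
  | cons a l₁ =>
    cases l₂ with
    | nil => simp [evalWord, omul]
    | cons b l₂ =>
      show some (List.foldl _ (f a) (l₁ ++ b :: l₂)) = omul (some _) (some _)
      rw [List.foldl_append, List.foldl_cons]
      simp only [omul]
      rw [foldl_mul_assoc]

/-! ### word substitution -/

def wsubst {β α : Type*} (w : β → List α) (u : List β) : List α := (u.map w).flatten

@[simp] lemma wsubst_nil {β α : Type*} (w : β → List α) : wsubst w [] = [] := rfl

@[simp] lemma wsubst_cons {β α : Type*} (w : β → List α) (b : β) (u : List β) :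
    wsubst w (b :: u) = w b ++ wsubst w u := rfl

lemma wsubst_eq_nil_iff {β α : Type*} {w : β → List α} (hw : ∀ b, w b ≠ []) {u : List β} :
    wsubst w u = [] ↔ u = [] := by
  cases u with
  | nil => simp
  | cons b u => simp [hw b]

lemma evalWord_wsubst {β α : Type*} {w : β → List α} {g : α → S} {f : β → S}
    (hwv : ∀ b, evalWord g (w b) = some (f b)) (u : List β) :
    evalWord g (wsubst w u) = evalWord f u := by
  induction u with
  | nil => rfl
  | cons b u ih =>
    have h1 : evalWord f (b :: u) = omul (some (f b)) (evalWord f u) := by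
      have := evalWord_append f [b] u
      simpa [evalWord] using this
    rw [wsubst_cons, evalWord_append, hwv, ih, h1]

end WPAux
end Part1

section Part2

namespace WPAux
open AsyncFSA

/-- A finite-state machine like `AsyncFSA` but with state space in any universe. -/
structure PreFSA (α β : Type*) where
  Q : Type*
  [fin : Finite Q]
  init : Q
  accept : Set Q
  trans : Q → Option α → Option β → Q → Prop

namespace PreFSA

variable {α β : Type*}

inductive Reaches (M : PreFSA α β) : M.Q → List α → List β → M.Q → Prop
  | refl (q : M.Q) : Reaches M q [] [] q
  | step {p q r : M.Q} {a : Option α} {b : Option β} {u : List α} {v : List β} :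
      M.trans p a b q → Reaches M q u v r →
      Reaches M p (a.toList ++ u) (b.toList ++ v) r

def Accepts (M : PreFSA α β) (u : List α) (v : List β) : Prop :=
  ∃ q ∈ M.accept, M.Reaches M.init u v q

/-- Every `PreFSA` can be realized as a genuine `AsyncFSA`. -/
lemma exists_async (P : PreFSA α β) :
    ∃ M : AsyncFSA α β, ∀ u v, M.Accepts u v ↔ P.Accepts u v := by
  haveI := P.fin
  obtain ⟨n, ⟨e⟩⟩ := Finite.exists_equiv_fin P.Q
  let M : AsyncFSA α β := ⟨Fin n, e P.init, e '' P.accept,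
    fun q a b q' => P.trans (e.symm q) a b (e.symm q')⟩
  refine ⟨M, ?_⟩
  intro u v
  have key1 : ∀ (p r : M.Q) (u v), M.Reaches p u v r →
      P.Reaches (e.symm p) u v (e.symm r) := by
    intro p r u v h
    induction h with
    | refl q => exact Reaches.refl _
    | step ht _ ih => exact Reaches.step ht ih
  have key2 : ∀ (p r : P.Q) (u v), P.Reaches p u v r →
      M.Reaches (e p) u v (e r) := by
    intro p r u v h
    induction h with
    | refl q => exact AsyncFSA.Reaches.refl _
    | step ht _ ih => exact AsyncFSA.Reaches.step (show M.trans _ _ _ _ by simpa [M] using ht) ih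
  constructor
  · rintro ⟨q, hq, hre⟩
    obtain ⟨q₀, hq₀, rfl⟩ := hq
    refine ⟨q₀, hq₀, ?_⟩
    have := key1 _ _ _ _ hre
    simpa [M] using this
  · rintro ⟨q, hq, hre⟩
    exact ⟨e q, ⟨q, hq, rfl⟩, key2 _ _ _ _ hre⟩

end PreFSA

/-! ### The product machine simulating a substituted word problem -/

inductive OLoad {β α : Type*} (w : β → List α) : Option β → List α → List α → Prop
  | none (s) : OLoad w none s s
  | some (b) : OLoad w (some b) [] (w b)

inductive OCons {α : Type*} : Option α → List α → List α → Prop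
  | none (s) : OCons none s s
  | some (a) (s) : OCons (some a) (a :: s) s

lemma OLoad.eq_append {β α : Type*} {w : β → List α} {ob s s₁} (h : OLoad w ob s s₁) :
    s₁ = s ++ wsubst w ob.toList := by
  cases h <;> simp [wsubst]

lemma OCons.eq_append {α : Type*} {oa : Option α} {s₁ s'} (h : OCons oa s₁ s') :
    s₁ = oa.toList ++ s' := by
  cases h <;> simp

def Buf (α : Type*) (N : ℕ) : Type _ := ↥{l : List α | l.length ≤ N}

instance {α : Type*} [Finite α] {N : ℕ} : Finite (Buf α N) :=
  (List.finite_length_le α N).to_subtype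

def prodPre {α β : Type*} [Finite α] (M : AsyncFSA α α) (w : β → List α) (N : ℕ) :
    PreFSA β β where
  Q := M.Q × Buf α N × Buf α N
  fin := by haveI := M.fin; infer_instance
  init := ⟨M.init, ⟨[], by simp⟩, ⟨[], by simp⟩⟩
  accept := {p | p.1 ∈ M.accept ∧ p.2.1.val = [] ∧ p.2.2.val = []}
  trans := fun p ob1 ob2 p' => ∃ s₁ t₁ oa ob,
    OLoad w ob1 p.2.1.val s₁ ∧ OLoad w ob2 p.2.2.val t₁ ∧
    M.trans p.1 oa ob p'.1 ∧ OCons oa s₁ p'.2.1.val ∧ OCons ob t₁ p'.2.2.val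

variable {α β : Type*} [Finite α] {M : AsyncFSA α α} {w : β → List α} {N : ℕ}

lemma prod_sound {p r u v} (h : (prodPre M w N).Reaches p u v r)
    (hr1 : r.2.1.val = []) (hr2 : r.2.2.val = []) :
    M.Reaches p.1 (p.2.1.val ++ wsubst w u) (p.2.2.val ++ wsubst w v) r.1 := by
  induction h with
  | refl q =>
    simp only [hr1, hr2, wsubst_nil, List.append_nil]
    exact AsyncFSA.Reaches.refl _
  | @step p q r ob1 ob2 u v h1 h2 ih =>
    obtain ⟨s₁, t₁, oa, ob, hl1, hl2, htr, hc1, hc2⟩ := h1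
    have key1 : p.2.1.val ++ wsubst w (ob1.toList ++ u)
        = oa.toList ++ (q.2.1.val ++ wsubst w u) := by
      have e1 := hl1.eq_append
      have e2 := hc1.eq_append
      simp only [wsubst, List.map_append, List.flatten_append, ← List.append_assoc]
      rw [← wsubst, ← wsubst, ← e1, e2, List.append_assoc]
    have key2 : p.2.2.val ++ wsubst w (ob2.toList ++ v)
        = ob.toList ++ (q.2.2.val ++ wsubst w v) := by
      have e1 := hl2.eq_append
      have e2 := hc2.eq_append
      simp only [wsubst, List.map_append, List.flatten_append, ← List.append_assoc]
      rw [← wsubst, ← wsubst, ← e1, e2, List.append_assoc]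
    rw [key1, key2]
    exact AsyncFSA.Reaches.step htr (ih hr1 hr2)

omit [Finite α] in
lemma split_step (hw : ∀ b, w b ≠ []) (hN : ∀ b, (w b).length ≤ N)
    {oa : Option α} {s x' : List α} {u : List β} (hs : s.length ≤ N)
    (hx : s ++ wsubst w u = oa.toList ++ x') :
    ∃ (ob1 : Option β) (u₁ : List β) (s₁ s' : List α),
      OLoad w ob1 s s₁ ∧ OCons oa s₁ s' ∧ u = ob1.toList ++ u₁ ∧
      x' = s' ++ wsubst w u₁ ∧ s'.length ≤ N := by
  cases oa with
  | none =>
    exact ⟨none, u, s, s, OLoad.none s, OCons.none s, rfl, by simpa using hx.symm, hs⟩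
  | some a =>
    cases s with
    | cons c s'' =>
      simp only [Option.toList_some, List.singleton_append, List.cons_append] at hx
      injection hx with h1 h2
      subst h1
      exact ⟨none, u, c :: s'', s'', OLoad.none _, OCons.some c s'', rfl, h2.symm,
        le_trans (Nat.le_succ _) hs⟩
    | nil =>
      simp only [List.nil_append] at hx
      cases u with
      | nil => simp at hx
      | cons b u₁ =>
        rw [wsubst_cons] at hx
        cases hwb : w b with
        | nil => exact absurd hwb (hw b)
        | cons c rest =>
          rw [hwb] at hx
          simp only [List.cons_append, Option.toList_some, List.cons_append] at hx
          have hc : c = a := List.head_eq_of_cons_eq hx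
          have hx' : rest ++ wsubst w u₁ = x' := List.tail_eq_of_cons_eq hx
          refine ⟨some b, u₁, w b, rest, OLoad.some b, ?_, rfl, hx'.symm, ?_⟩
          · rw [hwb, hc]; exact OCons.some a rest
          · have := hN b
            rw [hwb] at this
            simpa using Nat.le_of_succ_le this

lemma prod_complete (hw : ∀ b, w b ≠ []) (hN : ∀ b, (w b).length ≤ N)
    {q qf : M.Q} {x y : List α} (h : M.Reaches q x y qf) :
    ∀ (u v : List β) (s t : List α) (hs : s.length ≤ N) (ht : t.length ≤ N),
      x = s ++ wsubst w u → y = t ++ wsubst w v →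
      (prodPre M w N).Reaches ⟨q, ⟨s, hs⟩, ⟨t, ht⟩⟩ u v
        ⟨qf, ⟨[], by simp⟩, ⟨[], by simp⟩⟩ := by
  induction h with
  | refl q =>
    intro u v s t hs ht hx hy
    have hs0 : s = [] := by
      cases s with | nil => rfl | cons a s => simp at hx
    subst hs0
    simp only [List.nil_append] at hx hy
    have hu : u = [] := (wsubst_eq_nil_iff hw).mp hx.symm
    have ht0 : t = [] := by
      cases t with | nil => rfl | cons a t => simp at hy
    subst ht0
    have hv : v = [] := (wsubst_eq_nil_iff hw).mp hy.symm
    subst hu; subst hv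
    exact PreFSA.Reaches.refl _
  | @step p q r oa ob x' y' htr h2 ih =>
    intro u v s t hs ht hx hy
    obtain ⟨ob1, u₁, s₁, s', hl1, hc1, hu, hx', hs'⟩ := split_step hw hN hs hx.symm
    obtain ⟨ob2, v₁, t₁, t', hl2, hc2, hv, hy', ht'⟩ := split_step hw hN ht hy.symm
    have hstep : (prodPre M w N).trans ⟨p, ⟨s, hs⟩, ⟨t, ht⟩⟩ ob1 ob2
        ⟨q, ⟨s', hs'⟩, ⟨t', ht'⟩⟩ := ⟨s₁, t₁, oa, ob, hl1, hl2, htr, hc1, hc2⟩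
    have := PreFSA.Reaches.step hstep (ih u₁ v₁ s' t' hs' ht' hx' hy')
    rw [hu, hv]
    exact this

lemma prod_accepts (hw : ∀ b, w b ≠ []) (hN : ∀ b, (w b).length ≤ N) (u v : List β) :
    (prodPre M w N).Accepts u v ↔ M.Accepts (wsubst w u) (wsubst w v) := by
  constructor
  · rintro ⟨⟨qf, bs, bt⟩, ⟨hqf, hb1, hb2⟩, hre⟩
    refine ⟨qf, hqf, ?_⟩
    have := prod_sound hre hb1 hb2
    exact this
  · rintro ⟨qf, hqf, hre⟩
    refine ⟨⟨qf, ⟨[], by simp⟩, ⟨[], by simp⟩⟩, ⟨hqf, rfl, rfl⟩, ?_⟩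
    exact prod_complete hw hN hre u v [] [] (by simp) (by simp) rfl rfl

end WPAux
end Part2

/-- Rationality of the word problem is independent of the choice of finite
generating set. -/
theorem stmt_8 {S : Type*} [Semigroup S]
    (h : ∃ A : Set S, A.Finite ∧ Subsemigroup.closure A = ⊤ ∧
      IsRationalRel (SWP A)) :
    ∀ B : Set S, B.Finite → Subsemigroup.closure B = ⊤ →
      IsRationalRel (SWP B) := by
  obtain ⟨A, hAfin, hAgen, MA, hMA⟩ := h
  intro B hBfin _hBgen
  haveI := hAfin.to_subtype
  haveI := hBfin.to_subtype
  -- every element of `S` is represented by a nonempty word over `A`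
  have hrep : ∀ s : S, ∃ l : List ↥A, l ≠ [] ∧ evalWord Subtype.val l = some s := by
    intro s
    have hs : s ∈ Subsemigroup.closure A := by rw [hAgen]; exact Subsemigroup.mem_top s
    induction hs using Subsemigroup.closure_induction with
    | mem x hx => exact ⟨[⟨x, hx⟩], by simp, rfl⟩
    | mul x y hx hy ihx ihy =>
      obtain ⟨l₁, h₁, e₁⟩ := ihx
      obtain ⟨l₂, h₂, e₂⟩ := ihy
      refine ⟨l₁ ++ l₂, by simp [h₁], ?_⟩
      rw [WPAux.evalWord_append, e₁, e₂]
      rfl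
  choose w hwne hweval using fun b : ↥B => hrep b.val
  obtain ⟨N, hN⟩ := Finite.exists_le fun b : ↥B => (w b).length
  obtain ⟨M', hM'⟩ := (WPAux.prodPre MA w N).exists_async
  refine ⟨M', ?_⟩
  intro p
  refine Iff.trans ?_ ((hM' p.1 p.2).symm)
  refine Iff.trans ?_ ((WPAux.prod_accepts hwne hN p.1 p.2).symm)
  refine Iff.trans ?_ (hMA (WPAux.wsubst w p.1, WPAux.wsubst w p.2))
  simp only [SWP, Set.mem_setOf_eq, ne_eq, WPAux.wsubst_eq_nil_iff hwne,
    WPAux.evalWord_wsubst hweval]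
end

section
/- Let S be a semigroup with rational word problem (with respect to some, equivalently any, finite generating set). Then every finitely generated subsemigroup T of S has rational word problem. -/
-- ===== auxiliary development =====

namespace SWPaux
set_option linter.unusedSectionVars false

lemma reaches_trans {A B : Type*} (M : AsyncFSA A B) {p q r : M.Q} {u v u' v'}
    (h1 : M.Reaches p u v q) (h2 : M.Reaches q u' v' r) :
    M.Reaches p (u ++ u') (v ++ v') r := by
  induction h1 with
  | refl => simpa using h2
  | step t _ ih =>
      rw [List.append_assoc, List.append_assoc]
      exact AsyncFSA.Reaches.step t (ih h2)

section eval
variable {S : Type*} [Semigroup S]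

lemma foldl_mul {α : Type*} (f : α → S) (x z : S) (l : List α) :
    x * List.foldl (fun s y => s * f y) z l = List.foldl (fun s y => s * f y) (x * z) l := by
  induction l generalizing z with
  | nil => rfl
  | cons h t ih => rw [List.foldl_cons, List.foldl_cons, ih, mul_assoc]

lemma evalWord_append {α : Type*} (f : α → S) {l₁ l₂ : List α} {x y : S}
    (h₁ : evalWord f l₁ = some x) (h₂ : evalWord f l₂ = some y) :
    evalWord f (l₁ ++ l₂) = some (x * y) := by
  cases l₁ with
  | nil => simp [evalWord] at h₁
  | cons a t =>
    cases l₂ with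
    | nil => simp [evalWord] at h₂
    | cons b t₂ =>
      rw [List.cons_append]
      simp only [evalWord, Option.some_inj] at h₁ h₂ ⊢
      rw [List.foldl_append, List.foldl_cons, h₁, ← h₂, foldl_mul]

lemma evalWord_isSome {α : Type*} (f : α → S) {l : List α} (hl : l ≠ []) :
    ∃ x, evalWord f l = some x := by
  cases l with
  | nil => exact absurd rfl hl
  | cons a t => exact ⟨_, rfl⟩

lemma exists_word {A : Set S} (hgen : Subsemigroup.closure A = ⊤) (x : S) :
    ∃ l : List ↥A, l ≠ [] ∧ evalWord Subtype.val l = some x := by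
  have hx : x ∈ Subsemigroup.closure A := by rw [hgen]; trivial
  induction hx using Subsemigroup.closure_induction with
  | mem a ha => exact ⟨[⟨a, ha⟩], by simp, rfl⟩
  | mul a b _ _ iha ihb =>
      obtain ⟨l₁, h₁, e₁⟩ := iha
      obtain ⟨l₂, h₂, e₂⟩ := ihb
      exact ⟨l₁ ++ l₂, by simp [h₁], evalWord_append _ e₁ e₂⟩

variable {A C : Set S}

def expandA (φ : ↥C → List ↥A) (u : List ↥C) : List ↥A := (u.map φ).flatten

@[simp] lemma expandA_nil (φ : ↥C → List ↥A) : expandA φ [] = [] := rfl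

@[simp] lemma expandA_cons (φ : ↥C → List ↥A) (c : ↥C) (u : List ↥C) :
    expandA φ (c :: u) = φ c ++ expandA φ u := by simp [expandA]

lemma expandA_eq_nil (φ : ↥C → List ↥A) (hφ : ∀ c, φ c ≠ []) {u : List ↥C}
    (h : expandA φ u = []) : u = [] := by
  cases u with
  | nil => rfl
  | cons c t => simp [expandA_cons] at h; exact absurd h.1 (hφ c)

lemma evalWord_expandA (φ : ↥C → List ↥A)
    (hφ : ∀ c, evalWord Subtype.val (φ c) = some c.val) {u : List ↥C} (hu : u ≠ []) :
    evalWord Subtype.val (expandA φ u) = evalWord Subtype.val u := by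
  induction u with
  | nil => exact absurd rfl hu
  | cons c t ih =>
      cases t with
      | nil => simpa [evalWord] using hφ c
      | cons d t' =>
          obtain ⟨y, hy⟩ := evalWord_isSome (Subtype.val : ↥C → S) (l := d :: t') (by simp)
          rw [expandA_cons]
          rw [evalWord_append _ (hφ c) (by rw [ih (by simp)]; exact hy)]
          have : evalWord Subtype.val [c] = some c.val := rfl
          rw [show (c :: d :: t' : List ↥C) = [c] ++ (d :: t') from rfl,
            evalWord_append _ this hy]

end eval
end SWPaux

namespace SWPaux
set_option linter.unusedSectionVars false

structure St (Q : Type) (n k : ℕ) : Type where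
  q : Q
  b1 : List (Fin n)
  b2 : List (Fin n)
  f1 : Bool
  f2 : Bool
  hb1 : b1.length ≤ k
  hb2 : b2.length ≤ k

instance St.finite {Q : Type} {n k : ℕ} [Finite Q] : Finite (St Q n k) := by
  haveI : Finite {l : List (Fin n) // l.length ≤ k} := (List.finite_length_le (Fin n) k).to_subtype
  exact Finite.of_injective
    (fun s : St Q n k =>
      (s.q, (⟨s.b1, s.hb1⟩ : {l : List (Fin n) // l.length ≤ k}),
        (⟨s.b2, s.hb2⟩ : {l : List (Fin n) // l.length ≤ k}), s.f1, s.f2))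
    (by
      intro a b hab
      cases a; cases b
      simp only [Prod.mk.injEq, Subtype.mk.injEq] at hab
      simp_all)

section main
variable {S : Type*} [Semigroup S] {A C : Set S} {n : ℕ}

/-- Transition relation of the simulating automaton. -/
def Tr (M : AsyncFSA ↥A ↥A) (e : ↥A ≃ Fin n) (φ : ↥C → List ↥A) (k : ℕ) :
    St M.Q n k → Option ↥C → Option ↥C → St M.Q n k → Prop := fun s a b s' =>
  (∃ c, a = some c ∧ b = none ∧ s.b1 = [] ∧ s'.q = s.q ∧ s'.b1 = (φ c).map e ∧
    s'.b2 = s.b2 ∧ s'.f1 = true ∧ s'.f2 = s.f2) ∨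
  (∃ c, a = none ∧ b = some c ∧ s.b2 = [] ∧ s'.q = s.q ∧ s'.b2 = (φ c).map e ∧
    s'.b1 = s.b1 ∧ s'.f1 = s.f1 ∧ s'.f2 = true) ∨
  (a = none ∧ b = none ∧ s'.f1 = s.f1 ∧ s'.f2 = s.f2 ∧
    ∃ oa ob, M.trans s.q oa ob s'.q ∧ s.b1 = oa.toList.map e ++ s'.b1 ∧
      s.b2 = ob.toList.map e ++ s'.b2)

/-- The simulating automaton. -/
def subAut (M : AsyncFSA ↥A ↥A) (e : ↥A ≃ Fin n) (φ : ↥C → List ↥A) (k : ℕ) :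
    AsyncFSA ↥C ↥C where
  Q := St M.Q n k
  fin := letI := M.fin; inferInstance
  init := ⟨M.init, [], [], false, false, by simp, by simp⟩
  accept := {s | s.q ∈ M.accept ∧ s.b1 = [] ∧ s.b2 = [] ∧ s.f1 = true ∧ s.f2 = true}
  trans := Tr M e φ k

lemma sound (M : AsyncFSA ↥A ↥A) (e : ↥A ≃ Fin n) (φ : ↥C → List ↥A) (k : ℕ)
    {s s' : (subAut M e φ k).Q} {u v : List ↥C}
    (h : (subAut M e φ k).Reaches s u v s') :
    ∃ w₁ w₂, M.Reaches s.q w₁ w₂ s'.q ∧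
      s.b1.map e.symm ++ expandA φ u = w₁ ++ s'.b1.map e.symm ∧
      s.b2.map e.symm ++ expandA φ v = w₂ ++ s'.b2.map e.symm ∧
      s'.f1 = (s.f1 || !u.isEmpty) ∧ s'.f2 = (s.f2 || !v.isEmpty) := by
  induction h with
  | refl q => exact ⟨[], [], .refl _, by simp, by simp, by simp, by simp⟩
  | @step p q r a b u v t _ ih =>
      obtain ⟨w₁, w₂, hr, h1, h2, hf1, hf2⟩ := ih
      rcases t with ⟨c, rfl, rfl, hb1, hq, hb1', hb2', hf1', hf2'⟩ |
        ⟨c, rfl, rfl, hb2, hq, hb2', hb1', hf1', hf2'⟩ |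
        ⟨rfl, rfl, hf1', hf2', oa, ob, ht, hb1, hb2⟩
      · refine ⟨w₁, w₂, by rwa [hq] at hr, ?_, ?_, ?_, ?_⟩
        · rw [hb1]; simp only [Option.toList_some, List.singleton_append, expandA_cons]
          rw [← h1, hb1']; simp
        · rw [hb2'] at h2; simpa using h2
        · rw [hf1, hf1']; simp
        · rw [hf2, hf2']; simp
      · refine ⟨w₁, w₂, by rwa [hq] at hr, ?_, ?_, ?_, ?_⟩
        · rw [hb1'] at h1; simpa using h1
        · rw [hb2]; simp only [Option.toList_some, List.singleton_append, expandA_cons]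
          rw [← h2, hb2']; simp
        · rw [hf1, hf1']; simp
        · rw [hf2, hf2']; simp
      · refine ⟨oa.toList ++ w₁, ob.toList ++ w₂, .step ht hr, ?_, ?_, ?_, ?_⟩
        · rw [hb1]; simp only [List.map_append, List.map_map]
          simp only [Option.toList_none, List.nil_append]
          rw [List.append_assoc, h1, ← List.append_assoc]
          congr 1; congr 1
          simp
        · rw [hb2]; simp only [List.map_append, List.map_map]
          simp only [Option.toList_none, List.nil_append]
          rw [List.append_assoc, h2, ← List.append_assoc]
          congr 1; congr 1
          simp
        · rw [hf1, hf1']; simp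
        · rw [hf2, hf2']; simp

lemma decomp (e : ↥A ≃ Fin n) (φ : ↥C → List ↥A) (hφne : ∀ c, φ c ≠ [])
    (oa : Option ↥A) (b : List (Fin n)) (u : List ↥C) (w : List ↥A)
    (h : b.map e.symm ++ expandA φ u = oa.toList ++ w) :
    (∃ r, b = oa.toList.map e ++ r ∧ r.map e.symm ++ expandA φ u = w ∧
      r.length ≤ b.length) ∨
    (∃ (a : ↥A) (c : ↥C) (t : List ↥A) (u₁ : List ↥C), oa = some a ∧ b = [] ∧
      u = c :: u₁ ∧ φ c = a :: t ∧ t ++ expandA φ u₁ = w) := by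
  cases oa with
  | none => exact Or.inl ⟨b, by simp, by simpa using h, le_refl _⟩
  | some a =>
      cases b with
      | cons x xs =>
          simp only [List.map_cons, List.cons_append, Option.toList_some,
            List.singleton_append, List.cons.injEq] at h ⊢
          refine Or.inl ⟨xs, ⟨?_, rfl⟩, h.2, by simp⟩
          rw [← h.1]; simp
      | nil =>
          simp only [List.map_nil, List.nil_append, Option.toList_some,
            List.singleton_append] at h
          cases u with
          | nil => simp at h
          | cons c u₁ =>
              rw [expandA_cons] at h
              cases hc : φ c with
              | nil => exact absurd hc (hφne c)
              | cons a' t =>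
                  rw [hc, List.cons_append, List.cons.injEq] at h
                  exact Or.inr ⟨a, c, t, u₁, rfl, rfl, rfl, by rw [hc, h.1], h.2⟩

lemma prep1 (M : AsyncFSA ↥A ↥A) (e : ↥A ≃ Fin n) (φ : ↥C → List ↥A) (k : ℕ)
    (hφne : ∀ c, φ c ≠ []) (hφk : ∀ c, (φ c).length ≤ k)
    (q : M.Q) (b1 b2 : List (Fin n)) (h1 : b1.length ≤ k) (h2 : b2.length ≤ k)
    (f1 f2 : Bool) (oa : Option ↥A) (w : List ↥A) (u : List ↥C)
    (hu : b1.map e.symm ++ expandA φ u = oa.toList ++ w) :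
    ∃ (r : List (Fin n)) (hmid : (oa.toList.map e ++ r).length ≤ k)
      (u₁ du : List ↥C) (f1' : Bool),
      u = du ++ u₁ ∧ r.map e.symm ++ expandA φ u₁ = w ∧ r.length ≤ k ∧
      ((f1' || !u₁.isEmpty) = (f1 || !u.isEmpty)) ∧
      (subAut M e φ k).Reaches ⟨q, b1, b2, f1, f2, h1, h2⟩ du []
        ⟨q, oa.toList.map e ++ r, b2, f1', f2, hmid, h2⟩ := by
  rcases decomp e φ hφne oa b1 u w hu with ⟨r, hb, hw, hlen⟩ |
    ⟨a, c, t, u₁, rfl, rfl, rfl, hφc, hw⟩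
  · have hmid : (oa.toList.map e ++ r).length ≤ k := by rw [← hb]; exact h1
    refine ⟨r, hmid, u, [], f1, by simp, hw, ?_, rfl, ?_⟩
    · calc r.length ≤ b1.length := hlen
        _ ≤ k := h1
    · have : b1 = oa.toList.map e ++ r := hb
      subst this
      exact .refl _
  · have htk : (t.map e).length ≤ k := by
      have := hφk c
      rw [hφc] at this
      simpa using Nat.le_of_succ_le this
    have hmid : ((some a).toList.map e ++ t.map e).length ≤ k := by
      have := hφk c; rw [hφc] at this; simpa using this
    refine ⟨t.map e, hmid, u₁, [c], true, rfl, by simpa using hw, htk, by simp, ?_⟩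
    have hload : Tr M e φ k ⟨q, [], b2, f1, f2, h1, h2⟩ (some c) none
        ⟨q, (some a).toList.map e ++ t.map e, b2, true, f2, hmid, h2⟩ :=
      Or.inl ⟨c, rfl, rfl, rfl, rfl, by simp [hφc], rfl, rfl, rfl⟩
    have := AsyncFSA.Reaches.step (M := subAut M e φ k) hload (.refl _)
    simpa using this

lemma prep2 (M : AsyncFSA ↥A ↥A) (e : ↥A ≃ Fin n) (φ : ↥C → List ↥A) (k : ℕ)
    (hφne : ∀ c, φ c ≠ []) (hφk : ∀ c, (φ c).length ≤ k)
    (q : M.Q) (b1 b2 : List (Fin n)) (h1 : b1.length ≤ k) (h2 : b2.length ≤ k)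
    (f1 f2 : Bool) (ob : Option ↥A) (w : List ↥A) (v : List ↥C)
    (hv : b2.map e.symm ++ expandA φ v = ob.toList ++ w) :
    ∃ (r : List (Fin n)) (hmid : (ob.toList.map e ++ r).length ≤ k)
      (v₁ dv : List ↥C) (f2' : Bool),
      v = dv ++ v₁ ∧ r.map e.symm ++ expandA φ v₁ = w ∧ r.length ≤ k ∧
      ((f2' || !v₁.isEmpty) = (f2 || !v.isEmpty)) ∧
      (subAut M e φ k).Reaches ⟨q, b1, b2, f1, f2, h1, h2⟩ [] dv
        ⟨q, b1, ob.toList.map e ++ r, f1, f2', h1, hmid⟩ := by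
  rcases decomp e φ hφne ob b2 v w hv with ⟨r, hb, hw, hlen⟩ |
    ⟨a, c, t, v₁, rfl, rfl, rfl, hφc, hw⟩
  · have hmid : (ob.toList.map e ++ r).length ≤ k := by rw [← hb]; exact h2
    refine ⟨r, hmid, v, [], f2, by simp, hw, ?_, rfl, ?_⟩
    · calc r.length ≤ b2.length := hlen
        _ ≤ k := h2
    · have : b2 = ob.toList.map e ++ r := hb
      subst this
      exact .refl _
  · have htk : (t.map e).length ≤ k := by
      have := hφk c
      rw [hφc] at this
      simpa using Nat.le_of_succ_le this
    have hmid : ((some a).toList.map e ++ t.map e).length ≤ k := by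
      have := hφk c; rw [hφc] at this; simpa using this
    refine ⟨t.map e, hmid, v₁, [c], true, rfl, by simpa using hw, htk, by simp, ?_⟩
    have hload : Tr M e φ k ⟨q, b1, [], f1, f2, h1, h2⟩ none (some c)
        ⟨q, b1, (some a).toList.map e ++ t.map e, f1, true, h1, hmid⟩ :=
      Or.inr (Or.inl ⟨c, rfl, rfl, rfl, rfl, by simp [hφc], rfl, rfl, rfl⟩)
    have := AsyncFSA.Reaches.step (M := subAut M e φ k) hload (.refl _)
    simpa using this

lemma complete (M : AsyncFSA ↥A ↥A) (e : ↥A ≃ Fin n) (φ : ↥C → List ↥A) (k : ℕ)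
    (hφne : ∀ c, φ c ≠ []) (hφk : ∀ c, (φ c).length ≤ k)
    {q q' : M.Q} {w₁ w₂ : List ↥A} (h : M.Reaches q w₁ w₂ q') :
    ∀ (u v : List ↥C) (b1 b2 : List (Fin n)) (h1 : b1.length ≤ k)
      (h2 : b2.length ≤ k) (f1 f2 : Bool),
      b1.map e.symm ++ expandA φ u = w₁ → b2.map e.symm ++ expandA φ v = w₂ →
      (subAut M e φ k).Reaches ⟨q, b1, b2, f1, f2, h1, h2⟩ u v
        ⟨q', [], [], f1 || !u.isEmpty, f2 || !v.isEmpty, by simp, by simp⟩ := by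
  induction h with
  | refl p =>
      intro u v b1 b2 h1 h2 f1 f2 e1 e2
      rw [List.append_eq_nil_iff] at e1 e2
      obtain ⟨hb1, hu⟩ := e1
      obtain ⟨hb2, hv⟩ := e2
      rw [List.map_eq_nil_iff] at hb1 hb2
      have hu' := expandA_eq_nil φ hφne hu
      have hv' := expandA_eq_nil φ hφne hv
      subst hb1 hb2 hu' hv'
      simpa using AsyncFSA.Reaches.refl (M := subAut M e φ k) ⟨p, [], [], f1, f2, h1, h2⟩
  | @step p pq pr oa ob w₁' w₂' t tail ih =>
      intro u v b1 b2 h1 h2 f1 f2 e1 e2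
      obtain ⟨r1, hmid1, u₁, du, f1', hu, hw1, hr1, hflag1, run1⟩ :=
        prep1 M e φ k hφne hφk p b1 b2 h1 h2 f1 f2 oa w₁' u e1
      obtain ⟨r2, hmid2, v₁, dv, f2', hv, hw2, hr2, hflag2, run2⟩ :=
        prep2 M e φ k hφne hφk p (oa.toList.map e ++ r1) b2 hmid1 h2 f1' f2 ob w₂' v e2
      have hsim : Tr M e φ k ⟨p, oa.toList.map e ++ r1, ob.toList.map e ++ r2, f1', f2', hmid1, hmid2⟩
          none none ⟨pq, r1, r2, f1', f2', hr1, hr2⟩ :=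
        Or.inr (Or.inr ⟨rfl, rfl, rfl, rfl, oa, ob, t, rfl, rfl⟩)
      have runIH := ih u₁ v₁ r1 r2 hr1 hr2 f1' f2' hw1 hw2
      have runsim := AsyncFSA.Reaches.step (M := subAut M e φ k) hsim runIH
      simp only [Option.toList_none, List.nil_append] at runsim
      have run23 := reaches_trans _ run2 runsim
      have run123 := reaches_trans _ run1 run23
      rw [hflag1, hflag2] at run123
      simpa [← hu, ← hv] using run123

end main
end SWPaux
/-- Every finitely generated subsemigroup of a semigroup with rational word
problem has rational word problem. -/
theorem stmt_9 {S : Type*} [Semigroup S] (A : Set S) (hA : A.Finite)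
    (hgen : Subsemigroup.closure A = ⊤) (hrat : IsRationalRel (SWP A)) :
    ∀ C : Set S, C.Finite → IsRationalRel (SWP C) := by
  intro C hC
  classical
  obtain ⟨M, hM⟩ := hrat
  have hφ' : ∀ c : ↥C, ∃ l : List ↥A, l ≠ [] ∧ evalWord Subtype.val l = some c.val :=
    fun c => SWPaux.exists_word hgen c.val
  choose φ hφne hφeval using hφ'
  haveI := hA.fintype
  set n := Fintype.card ↥A with hn
  let e : ↥A ≃ Fin n := Fintype.equivFin ↥A
  haveI : Finite ↥C := hC.to_subtype
  obtain ⟨k, hk⟩ := Finite.exists_le fun c : ↥C => (φ c).length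
  refine ⟨SWPaux.subAut M e φ k, ?_⟩
  rintro ⟨u, v⟩
  constructor
  · rintro ⟨hu, hv, heq⟩
    have hxu : SWPaux.expandA φ u ≠ [] := fun h => hu (SWPaux.expandA_eq_nil φ hφne h)
    have hxv : SWPaux.expandA φ v ≠ [] := fun h => hv (SWPaux.expandA_eq_nil φ hφne h)
    have hmem : (SWPaux.expandA φ u, SWPaux.expandA φ v) ∈ SWP A := by
      refine ⟨hxu, hxv, ?_⟩
      rw [SWPaux.evalWord_expandA φ hφeval hu, SWPaux.evalWord_expandA φ hφeval hv]
      exact heq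
    obtain ⟨qf, hqf, run⟩ := (hM _).mp hmem
    have run' := SWPaux.complete M e φ k hφne hk run u v [] [] (by simp) (by simp)
      false false (by simp) (by simp)
    refine ⟨⟨qf, [], [], false || !u.isEmpty, false || !v.isEmpty, by simp, by simp⟩,
      ⟨hqf, rfl, rfl, ?_, ?_⟩, run'⟩
    · simp [List.isEmpty_eq_false_iff.mpr hu]
    · simp [List.isEmpty_eq_false_iff.mpr hv]
  · rintro ⟨s, ⟨hq, hb1, hb2, hf1, hf2⟩, run⟩
    obtain ⟨w₁, w₂, Mrun, e1, e2, ef1, ef2⟩ := SWPaux.sound M e φ k run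
    simp only [SWPaux.subAut] at Mrun e1 e2 ef1 ef2
    simp only [hb1, hb2, List.map_nil, List.nil_append, List.append_nil] at e1 e2
    have hu : u ≠ [] := by
      intro h
      rw [hf1, h] at ef1
      simp at ef1
    have hv : v ≠ [] := by
      intro h
      rw [hf2, h] at ef2
      simp at ef2
    have hacc : M.Accepts (SWPaux.expandA φ u) (SWPaux.expandA φ v) := by
      refine ⟨s.q, hq, ?_⟩
      rw [e1, e2]
      exact Mrun
    obtain ⟨-, -, heq⟩ := (hM ⟨SWPaux.expandA φ u, SWPaux.expandA φ v⟩).mpr hacc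
    refine ⟨hu, hv, ?_⟩
    rw [← SWPaux.evalWord_expandA φ hφeval hu, ← SWPaux.evalWord_expandA φ hφeval hv]
    exact heq
end

section
/- Let G be a group finitely generated by A as a monoid. Then the monoid word problem MWP(G,A) = {(v,w) ∈ A* × A* : v̄ = w̄} is a rational relation if and only if G is finite. -/
-- aux lemmas
namespace AsyncFSA

lemma reaches_trans {A B : Type*} (M : AsyncFSA A B) {p q r : M.Q}
    {u u' : List A} {v v' : List B}
    (h1 : M.Reaches p u v q) (h2 : M.Reaches q u' v' r) :
    M.Reaches p (u ++ u') (v ++ v') r := by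
  induction h1 with
  | refl => simpa
  | step ht _ ih =>
      rw [List.append_assoc, List.append_assoc]
      exact Reaches.step ht (ih h2)

lemma reaches_split {A B : Type*} (M : AsyncFSA A B) {p r : M.Q}
    {u : List A} {v : List B}
    (h : M.Reaches p u v r) (hv : v = []) (x y : List A) (hu : u = x ++ y) :
    ∃ q, M.Reaches p x [] q ∧ M.Reaches q y [] r := by
  induction h generalizing x with
  | refl q =>
      obtain ⟨rfl, rfl⟩ := List.append_eq_nil_iff.mp hu.symm
      exact ⟨q, Reaches.refl q, Reaches.refl q⟩
  | @step p q r a b u' v' ht hr ih =>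
      have hb : b = none := by
        cases b with
        | none => rfl
        | some b' => simp at hv
      subst hb
      have hv' : v' = [] := by simpa using hv
      cases x with
      | nil =>
          simp only [List.nil_append] at hu
          subst hu hv'
          exact ⟨p, Reaches.refl p, by simpa using Reaches.step ht hr⟩
      | cons c x' =>
          cases a with
          | none =>
              obtain ⟨q', h1, h2⟩ := ih hv' (c :: x') (by simpa using hu)
              exact ⟨q', by simpa using Reaches.step ht h1, h2⟩
          | some a' =>
              have hc : a' = c ∧ u' = x' ++ y := by
                constructor <;> simp_all
              obtain ⟨rfl, hu'⟩ := hc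
              obtain ⟨q', h1, h2⟩ := ih hv' x' hu'
              exact ⟨q', by simpa using Reaches.step (b := (none : Option B)) ht h1, h2⟩

end AsyncFSA

lemma exists_word {G : Type*} [Monoid G] {A : Set G}
    (hgen : Submonoid.closure A = ⊤) (g : G) :
    ∃ l : List ↥A, (l.map Subtype.val).prod = g := by
  have hg : g ∈ Submonoid.closure A := by rw [hgen]; trivial
  obtain ⟨l, hl, rfl⟩ := Submonoid.exists_list_of_mem_closure hg
  refine ⟨l.attach.map (fun y => ⟨y.1, hl y.1 y.2⟩), ?_⟩
  simp [List.map_map, Function.comp]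

lemma rational_of_finite {G : Type*} [Group G] (A : Set G) [Finite G] :
    IsRationalRel (MWP A) := by
  classical
  obtain ⟨n, ⟨e⟩⟩ := Finite.exists_equiv_fin G
  set ev : Option ↥A → G := fun o => o.elim 1 Subtype.val with hev
  set M : AsyncFSA ↥A ↥A :=
    { Q := Fin n
      init := e 1
      accept := {e 1}
      trans := fun p a b q => e.symm q = (ev a)⁻¹ * e.symm p * ev b } with hMdef
  have fwdlem : ∀ {q u v r}, M.Reaches q u v r →
      e.symm r = ((u.map Subtype.val).prod)⁻¹ * e.symm q * (v.map Subtype.val).prod := by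
    intro q u v r h
    induction h with
    | refl => simp
    | @step p q r a b u v ht _ ih =>
        rw [ih, ht]
        cases a <;> cases b <;> simp [ev, mul_assoc]
  have run1 : ∀ (u : List ↥A) (q : M.Q),
      M.Reaches q u [] (e (((u.map Subtype.val).prod)⁻¹ * e.symm q)) := by
    intro u
    induction u with
    | nil => intro q; simpa using AsyncFSA.Reaches.refl (M := M) q
    | cons a u ih =>
        intro q
        have hstep : M.trans q (some a) none (e ((a : G)⁻¹ * e.symm q)) := by
          show e.symm (e ((a : G)⁻¹ * e.symm q)) = (ev (some a))⁻¹ * e.symm q * ev none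
          simp [hMdef, ev]
        have := AsyncFSA.Reaches.step hstep (ih (e ((a : G)⁻¹ * e.symm q)))
        simpa [mul_assoc] using this
  have run2 : ∀ (v : List ↥A) (q : M.Q),
      M.Reaches q [] v (e (e.symm q * (v.map Subtype.val).prod)) := by
    intro v
    induction v with
    | nil => intro q; simpa using AsyncFSA.Reaches.refl (M := M) q
    | cons a v ih =>
        intro q
        have hstep : M.trans q none (some a) (e (e.symm q * (a : G))) := by
          show e.symm (e (e.symm q * (a : G))) = (ev none)⁻¹ * e.symm q * ev (some a)
          simp [hMdef, ev]
        have := AsyncFSA.Reaches.step hstep (ih (e (e.symm q * (a : G))))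
        simpa [mul_assoc] using this
  refine ⟨M, ?_⟩
  rintro ⟨u, v⟩
  constructor
  · intro h
    have h' : (u.map Subtype.val).prod = (v.map Subtype.val).prod := h
    refine ⟨e 1, rfl, ?_⟩
    have r1 := run1 u M.init
    have r2 := run2 v (e ((u.map Subtype.val).prod⁻¹ * e.symm M.init))
    have hc := M.reaches_trans r1 r2
    simp only [List.append_nil, List.nil_append] at hc
    have : e (e.symm (e ((u.map Subtype.val).prod⁻¹ * e.symm M.init)) *
        (v.map Subtype.val).prod) = e 1 := by
      simp only [hMdef, Equiv.symm_apply_apply, mul_one, ← h']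
      rw [show e.symm M.init = 1 from e.symm_apply_apply 1, mul_one, inv_mul_cancel]
    rwa [this] at hc
  · rintro ⟨f, hf, hr⟩
    have h1 := fwdlem hr
    have hf1 : f = e 1 := hf
    rw [hf1] at h1
    simp only [hMdef] at h1
    simp only [Equiv.symm_apply_apply] at h1
    have : (1 : G) = (u.map Subtype.val).prod⁻¹ * 1 * (v.map Subtype.val).prod := by
      rw [show e.symm M.init = 1 from e.symm_apply_apply 1] at h1; exact h1
    have := this.symm
    simp only [mul_one, one_mul] at this ⊢
    show (u.map Subtype.val).prod = (v.map Subtype.val).prod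
    exact (inv_mul_eq_one.mp this)

lemma finite_of_rational {G : Type*} [Group G] (A : Set G)
    (hgen : Submonoid.closure A = ⊤) (h : IsRationalRel (MWP A)) : Finite G := by
  classical
  obtain ⟨M, hM⟩ := h
  have : Finite M.Q := M.fin
  choose wd hwd using exists_word hgen
  refine Finite.of_surjective
    (fun q : M.Q => if h : ∃ v : List ↥A, M.Reaches M.init v [] q
      then ((h.choose).map Subtype.val).prod else 1) ?_
  intro g
  have hmem : ((wd g ++ wd g⁻¹ : List ↥A), ([] : List ↥A)) ∈ MWP A := by
    simp only [MWP, Set.mem_setOf_eq, List.map_append, List.prod_append, hwd,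
      List.map_nil, List.prod_nil, mul_inv_cancel]
  obtain ⟨f, hf, hrun⟩ := (hM _).mp hmem
  obtain ⟨q, h1, h2⟩ := M.reaches_split hrun rfl (wd g) (wd g⁻¹) rfl
  have hex : ∃ v : List ↥A, M.Reaches M.init v [] q := ⟨wd g, h1⟩
  refine ⟨q, ?_⟩
  simp only [dif_pos hex]
  have hv := hex.choose_spec
  have hrun2 : M.Reaches M.init (hex.choose ++ wd g⁻¹) [] f := by
    simpa using M.reaches_trans hv h2
  have hacc : ((hex.choose ++ wd g⁻¹ : List ↥A), ([] : List ↥A)) ∈ MWP A :=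
    (hM _).mpr ⟨f, hf, hrun2⟩
  have : (hex.choose.map Subtype.val).prod * g⁻¹ = 1 := by
    have := hacc
    simpa only [MWP, Set.mem_setOf_eq, List.map_append, List.prod_append, hwd,
      List.map_nil, List.prod_nil] using this
  exact mul_inv_eq_one.mp this

/-- A group finitely generated as a monoid has rational monoid word problem
iff it is finite. -/
theorem stmt_10 {G : Type*} [Group G] (A : Set G) (hA : A.Finite)
    (hgen : Submonoid.closure A = ⊤) :
    IsRationalRel (MWP A) ↔ Finite G := by
  constructor
  · exact finite_of_rational A hgen
  · intro hG
    exact rational_of_finite A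
end

section
/- Let M be a monoid finitely generated as a monoid by A, and let S be the subsemigroup of M generated by A. Then SWP(S,A) is rational if and only if MWP(M,A) is rational. -/
/-! ### Auxiliary constructions -/

section Aux

namespace AsyncFSA

variable {A B : Type*}

/-- The automaton accepting only the pair of empty words. -/
def epsA (A B : Type*) : AsyncFSA A B where
  Q := Unit
  fin := inferInstance
  init := ()
  accept := Set.univ
  trans := fun _ _ _ _ => False

theorem epsA_reaches {u : List A} {v : List B} {q q' : (epsA A B).Q}
    (h : (epsA A B).Reaches q u v q') : u = [] ∧ v = [] := by
  induction h with
  | refl => exact ⟨rfl, rfl⟩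
  | step t _ _ => exact absurd t id

theorem epsA_accepts (u : List A) (v : List B) :
    (epsA A B).Accepts u v ↔ u = [] ∧ v = [] := by
  constructor
  · rintro ⟨q, _, hr⟩; exact epsA_reaches hr
  · rintro ⟨rfl, rfl⟩; exact ⟨(), trivial, Reaches.refl _⟩

/-- Union of two automata. -/
def unionA (M₁ M₂ : AsyncFSA A B) : AsyncFSA A B where
  Q := Option (M₁.Q ⊕ M₂.Q)
  fin := by
    haveI i1 : Fintype M₁.Q := @Fintype.ofFinite _ M₁.fin
    haveI i2 : Fintype M₂.Q := @Fintype.ofFinite _ M₂.fin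
    infer_instance
  init := none
  accept := {s | (∃ q ∈ M₁.accept, s = some (.inl q)) ∨ (∃ q ∈ M₂.accept, s = some (.inr q))}
  trans := fun s a b s' =>
    (s = none ∧ a = none ∧ b = none ∧
      (s' = some (.inl M₁.init) ∨ s' = some (.inr M₂.init))) ∨
    (∃ p q, M₁.trans p a b q ∧ s = some (.inl p) ∧ s' = some (.inl q)) ∨
    (∃ p q, M₂.trans p a b q ∧ s = some (.inr p) ∧ s' = some (.inr q))

theorem unionA_lift_left {M₁ M₂ : AsyncFSA A B} {p q : M₁.Q} {u v}
    (h : M₁.Reaches p u v q) :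
    (unionA M₁ M₂).Reaches (some (.inl p)) u v (some (.inl q)) := by
  induction h with
  | refl => exact Reaches.refl _
  | step t _ ih => exact Reaches.step (Or.inr (Or.inl ⟨_, _, t, rfl, rfl⟩)) ih

theorem unionA_lift_right {M₁ M₂ : AsyncFSA A B} {p q : M₂.Q} {u v}
    (h : M₂.Reaches p u v q) :
    (unionA M₁ M₂).Reaches (some (.inr p)) u v (some (.inr q)) := by
  induction h with
  | refl => exact Reaches.refl _
  | step t _ ih => exact Reaches.step (Or.inr (Or.inr ⟨_, _, t, rfl, rfl⟩)) ih

theorem unionA_proj_left {M₁ M₂ : AsyncFSA A B} {s s' : (unionA M₁ M₂).Q} {u v}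
    (h : (unionA M₁ M₂).Reaches s u v s') {p : M₁.Q} (hs : s = some (.inl p)) :
    ∃ q, s' = some (.inl q) ∧ M₁.Reaches p u v q := by
  induction h generalizing p with
  | refl => exact ⟨p, hs, Reaches.refl _⟩
  | step t _ ih =>
    subst hs
    rcases t with ⟨h1, _⟩ | ⟨p', q', ht, hp, hq⟩ | ⟨p', q', ht, hp, hq⟩
    · exact absurd h1 (by simp)
    · obtain rfl : p = p' := by simpa using hp
      obtain ⟨q, hq', hr⟩ := ih hq
      exact ⟨q, hq', Reaches.step ht hr⟩
    · simp at hp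

theorem unionA_proj_right {M₁ M₂ : AsyncFSA A B} {s s' : (unionA M₁ M₂).Q} {u v}
    (h : (unionA M₁ M₂).Reaches s u v s') {p : M₂.Q} (hs : s = some (.inr p)) :
    ∃ q, s' = some (.inr q) ∧ M₂.Reaches p u v q := by
  induction h generalizing p with
  | refl => exact ⟨p, hs, Reaches.refl _⟩
  | step t _ ih =>
    subst hs
    rcases t with ⟨h1, _⟩ | ⟨p', q', ht, hp, hq⟩ | ⟨p', q', ht, hp, hq⟩
    · exact absurd h1 (by simp)
    · simp at hp
    · obtain rfl : p = p' := by simpa using hp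
      obtain ⟨q, hq', hr⟩ := ih hq
      exact ⟨q, hq', Reaches.step ht hr⟩

theorem unionA_accepts (M₁ M₂ : AsyncFSA A B) (u : List A) (v : List B) :
    (unionA M₁ M₂).Accepts u v ↔ M₁.Accepts u v ∨ M₂.Accepts u v := by
  constructor
  · rintro ⟨s, hs, hr⟩
    cases hr with
    | refl =>
      rcases hs with ⟨q, _, h⟩ | ⟨q, _, h⟩ <;> simp [unionA] at h
    | step t hr' =>
      rcases t with ⟨-, rfl, rfl, h1 | h1⟩ | ⟨p', q', ht, hp, hq⟩ | ⟨p', q', ht, hp, hq⟩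
      · subst h1
        obtain ⟨q, hq', hr⟩ := unionA_proj_left hr' rfl
        rcases hs with ⟨q₀, hq₀, h⟩ | ⟨q₀, hq₀, h⟩
        · rw [hq'] at h
          obtain rfl : q₀ = q := by simpa using h.symm
          exact Or.inl ⟨_, hq₀, hr⟩
        · rw [hq'] at h; simp at h
      · subst h1
        obtain ⟨q, hq', hr⟩ := unionA_proj_right hr' rfl
        rcases hs with ⟨q₀, hq₀, h⟩ | ⟨q₀, hq₀, h⟩
        · rw [hq'] at h; simp at h
        · rw [hq'] at h
          obtain rfl : q₀ = q := by simpa using h.symm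
          exact Or.inr ⟨_, hq₀, hr⟩
      · exact absurd hp (by simp [unionA])
      · exact absurd hp (by simp [unionA])
  · rintro (⟨q, hq, hr⟩ | ⟨q, hq, hr⟩)
    · refine ⟨some (.inl q), Or.inl ⟨q, hq, rfl⟩, ?_⟩
      have := Reaches.step (M := unionA M₁ M₂)
        (Or.inl ⟨rfl, rfl, rfl, Or.inl rfl⟩) (unionA_lift_left (M₂ := M₂) hr)
      exact (by simpa using this : (unionA M₁ M₂).Reaches none u v (some (.inl q)))
    · refine ⟨some (.inr q), Or.inr ⟨q, hq, rfl⟩, ?_⟩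
      have := Reaches.step (M := unionA M₁ M₂)
        (Or.inl ⟨rfl, rfl, rfl, Or.inr rfl⟩) (unionA_lift_right (M₁ := M₁) hr)
      exact (by simpa using this : (unionA M₁ M₂).Reaches none u v (some (.inr q)))

/-- Track whether each tape has read at least one letter. -/
def bitsA (M : AsyncFSA A B) : AsyncFSA A B where
  Q := M.Q × Bool × Bool
  fin := by haveI i1 : Fintype M.Q := @Fintype.ofFinite _ M.fin; infer_instance
  init := (M.init, false, false)
  accept := {s | s.1 ∈ M.accept ∧ s.2.1 = true ∧ s.2.2 = true}
  trans := fun s a b s' =>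
    M.trans s.1 a b s'.1 ∧ s'.2.1 = (s.2.1 || a.isSome) ∧ s'.2.2 = (s.2.2 || b.isSome)

private theorem boolaux {A : Type*} (a : Option A) (l : List A) (b : Bool) :
    ((b || a.isSome) || !l.isEmpty) = (b || !(a.toList ++ l).isEmpty) := by
  cases a <;> cases b <;> simp

theorem bitsA_reaches_fwd {M : AsyncFSA A B} {s s' : (bitsA M).Q} {u v}
    (h : (bitsA M).Reaches s u v s') :
    M.Reaches s.1 u v s'.1 ∧ s'.2.1 = (s.2.1 || !u.isEmpty) ∧
      s'.2.2 = (s.2.2 || !v.isEmpty) := by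
  induction h with
  | refl => simp [Reaches.refl]
  | step t _ ih =>
    obtain ⟨ht, h1, h2⟩ := t
    refine ⟨Reaches.step ht ih.1, ?_, ?_⟩
    · rw [ih.2.1, h1, boolaux]
    · rw [ih.2.2, h2, boolaux]

theorem bitsA_reaches_bwd {M : AsyncFSA A B} {p q : M.Q} {u v}
    (h : M.Reaches p u v q) (b₁ b₂ : Bool) :
    (bitsA M).Reaches (p, b₁, b₂) u v (q, b₁ || !u.isEmpty, b₂ || !v.isEmpty) := by
  induction h generalizing b₁ b₂ with
  | refl q0 => simpa using Reaches.refl (M := bitsA M) (q0, b₁, b₂)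
  | @step p' q' r a b u' v' t _ ih =>
    have hstep := Reaches.step (M := bitsA M)
      (p := (p', b₁, b₂)) (q := (q', b₁ || a.isSome, b₂ || b.isSome))
      ⟨t, rfl, rfl⟩ (ih _ _)
    rw [boolaux, boolaux] at hstep
    exact hstep

theorem bitsA_accepts (M : AsyncFSA A B) (u : List A) (v : List B) :
    (bitsA M).Accepts u v ↔ M.Accepts u v ∧ u ≠ [] ∧ v ≠ [] := by
  constructor
  · rintro ⟨⟨q, c₁, c₂⟩, ⟨hq, hc₁, hc₂⟩, hr⟩
    obtain ⟨hr', h1, h2⟩ := bitsA_reaches_fwd hr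
    simp only [bitsA] at h1 h2 hr' hq hc₁ hc₂
    refine ⟨⟨q, hq, hr'⟩, ?_, ?_⟩
    · rintro rfl; simp [hc₁] at h1
    · rintro rfl; simp [hc₂] at h2
  · rintro ⟨⟨q, hq, hr⟩, hu, hv⟩
    have hu' : u.isEmpty = false := by simpa using hu
    have hv' : v.isEmpty = false := by simpa using hv
    refine ⟨(q, true, true), ⟨hq, rfl, rfl⟩, ?_⟩
    have hb := bitsA_reaches_bwd (M := M) hr false false
    simp only [hu', hv', Bool.not_false, Bool.false_or] at hb
    exact hb

/-- Swap the two tapes. -/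
def swapA (M : AsyncFSA A B) : AsyncFSA B A where
  Q := M.Q
  fin := M.fin
  init := M.init
  accept := M.accept
  trans := fun s b a s' => M.trans s a b s'

theorem swapA_reaches {M : AsyncFSA A B} {p q : M.Q} {u v}
    (h : M.Reaches p u v q) : (swapA M).Reaches p v u q := by
  induction h with
  | refl => exact Reaches.refl _
  | step t _ ih => exact Reaches.step (M := swapA M) t ih

theorem swapA_reaches' {M : AsyncFSA A B} {p q : M.Q} {u v}
    (h : (swapA M).Reaches p v u q) : M.Reaches p u v q := by
  exact swapA_reaches h

theorem swapA_accepts (M : AsyncFSA A B) (u : List A) (v : List B) :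
    (swapA M).Accepts v u ↔ M.Accepts u v := by
  constructor
  · rintro ⟨q, hq, hr⟩; exact ⟨q, hq, swapA_reaches' hr⟩
  · rintro ⟨q, hq, hr⟩; exact ⟨q, hq, swapA_reaches hr⟩

theorem drop_of_suffix {B : Type*} {w s : List B} (h : s <:+ w) :
    ∃ k, k ≤ w.length ∧ w.drop k = s := by
  obtain ⟨t, rfl⟩ := h
  exact ⟨t.length, by simp, by simp⟩

/-- Fix the second tape to a fixed word `w`, read on the first tape only. -/
def sectA (M : AsyncFSA A B) (w : List B) : AsyncFSA A B where
  Q := M.Q × Fin (w.length + 1)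
  fin := by haveI i1 : Fintype M.Q := @Fintype.ofFinite _ M.fin; infer_instance
  init := (M.init, ⟨0, by omega⟩)
  accept := {s | s.1 ∈ M.accept ∧ w.drop s.2.1 = []}
  trans := fun s a b s' =>
    b = none ∧
      ((a = none ∧ s'.1 = s.1 ∧ w.drop s.2.1 = w.drop s'.2.1) ∨
       ∃ c : Option B, M.trans s.1 a c s'.1 ∧ w.drop s.2.1 = c.toList ++ w.drop s'.2.1)

theorem sectA_reaches_fwd {M : AsyncFSA A B} {w : List B} {s s' : (sectA M w).Q} {u v}
    (h : (sectA M w).Reaches s u v s') :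
    v = [] ∧ ∃ z, w.drop s.2.1 = z ++ w.drop s'.2.1 ∧ M.Reaches s.1 u z s'.1 := by
  induction h with
  | refl => exact ⟨rfl, [], rfl, Reaches.refl _⟩
  | step t _ ih =>
    obtain ⟨rfl, t⟩ := t
    obtain ⟨rfl, z, hz, hr⟩ := ih
    rcases t with ⟨rfl, h1, h2⟩ | ⟨c, ht, hsuf⟩
    · exact ⟨rfl, z, by rw [h2, hz], by rw [h1] at hr; simpa using hr⟩
    · refine ⟨rfl, c.toList ++ z, ?_, Reaches.step ht hr⟩
      rw [hsuf, hz, List.append_assoc]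

theorem sectA_reaches_bwd {M : AsyncFSA A B} {w : List B} {p q : M.Q} {u z}
    (h : M.Reaches p u z q) :
    ∀ (i j : Fin (w.length + 1)), w.drop i.1 = z ++ w.drop j.1 →
      (sectA M w).Reaches (p, i) u [] (q, j) := by
  induction h with
  | refl q0 =>
    intro i j hij
    rw [List.nil_append] at hij
    have hstep := Reaches.step (M := sectA M w) (p := (q0, i)) (q := (q0, j))
      (a := none) (b := none) ⟨rfl, Or.inl ⟨rfl, rfl, hij⟩⟩ (Reaches.refl _)
    simpa using hstep
  | @step p' q' r a c u' z' t _ ih =>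
    intro i j hij
    have hsuf : z' ++ w.drop j.1 <:+ w := by
      have h1 : z' ++ w.drop j.1 <:+ w.drop i.1 := by
        rw [hij, List.append_assoc]
        exact List.suffix_append _ _
      exact h1.trans (List.drop_suffix _ _)
    obtain ⟨k, hk, hdk⟩ := drop_of_suffix hsuf
    have hstep := Reaches.step (M := sectA M w)
      (p := (p', i)) (q := (q', ⟨k, by omega⟩)) (a := a) (b := none)
      ⟨rfl, Or.inr ⟨c, t, by simp only [hij, hdk, List.append_assoc]⟩⟩
      (ih ⟨k, by omega⟩ j (by exact hdk))
    simpa using hstep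

theorem sectA_accepts (M : AsyncFSA A B) (w : List B) (u : List A) (v : List B) :
    (sectA M w).Accepts u v ↔ v = [] ∧ M.Accepts u w := by
  constructor
  · rintro ⟨⟨q, i⟩, ⟨hq, hnil⟩, hr⟩
    obtain ⟨rfl, z, hz, hr'⟩ := sectA_reaches_fwd hr
    simp only [sectA, List.drop_zero] at hz hnil hr' hq
    rw [hnil, List.append_nil] at hz
    subst hz
    exact ⟨rfl, q, hq, hr'⟩
  · rintro ⟨rfl, q, hq, hr⟩
    refine ⟨(q, ⟨w.length, by omega⟩), ⟨hq, by simp⟩, ?_⟩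
    have hb := sectA_reaches_bwd (w := w) hr ⟨0, by omega⟩ ⟨w.length, by omega⟩ (by simp)
    exact hb

end AsyncFSA

open AsyncFSA in
theorem isRationalRel_union {A B : Type*} {R S : Set (List A × List B)}
    (hR : IsRationalRel R) (hS : IsRationalRel S) : IsRationalRel (R ∪ S) := by
  obtain ⟨M₁, h₁⟩ := hR
  obtain ⟨M₂, h₂⟩ := hS
  exact ⟨unionA M₁ M₂, fun p => by
    rw [Set.mem_union, h₁, h₂, unionA_accepts]⟩

open AsyncFSA in
theorem isRationalRel_eps {A B : Type*} :
    IsRationalRel {p : List A × List B | p.1 = [] ∧ p.2 = []} :=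
  ⟨epsA A B, fun p => by rw [Set.mem_setOf_eq, epsA_accepts]⟩

open AsyncFSA in
theorem isRationalRel_inter_ne {A B : Type*} {R : Set (List A × List B)}
    (hR : IsRationalRel R) :
    IsRationalRel (R ∩ {p | p.1 ≠ [] ∧ p.2 ≠ []}) := by
  obtain ⟨M, h⟩ := hR
  exact ⟨bitsA M, fun p => by
    rw [Set.mem_inter_iff, h, Set.mem_setOf_eq, bitsA_accepts]⟩

open AsyncFSA in
theorem isRationalRel_swap {A B : Type*} {R : Set (List A × List B)}
    (hR : IsRationalRel R) :
    IsRationalRel {p : List B × List A | (p.2, p.1) ∈ R} := by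
  obtain ⟨M, h⟩ := hR
  exact ⟨swapA M, fun p => by
    rw [Set.mem_setOf_eq, h, ← swapA_accepts]⟩

open AsyncFSA in
theorem isRationalRel_sectL {A B : Type*} {R : Set (List A × List B)}
    (hR : IsRationalRel R) (w : List B) :
    IsRationalRel {p : List A × List B | p.2 = [] ∧ (p.1, w) ∈ R} := by
  obtain ⟨M, h⟩ := hR
  exact ⟨sectA M w, fun p => by
    rw [Set.mem_setOf_eq, h, sectA_accepts]⟩

open AsyncFSA in
theorem isRationalRel_sectR {A B : Type*} {R : Set (List A × List B)}
    (hR : IsRationalRel R) (w : List A) :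
    IsRationalRel {p : List A × List B | p.1 = [] ∧ (w, p.2) ∈ R} := by
  have h1 := isRationalRel_sectL (isRationalRel_swap hR) w
  have h2 := isRationalRel_swap h1
  exact h2

theorem evalWord_eq_prod {α S : Type*} [Monoid S] (f : α → S) (u : List α) (hu : u ≠ []) :
    evalWord f u = some ((u.map f).prod) := by
  match u with
  | [] => exact absurd rfl hu
  | a :: l =>
    have key : ∀ (l : List α) (b : S),
        List.foldl (fun s x => s * f x) b l = b * (l.map f).prod := by
      intro l
      induction l with
      | nil => simp
      | cons x l ih => intro b; simp [ih, mul_assoc]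
    simp [evalWord, key]

theorem swp_iff {M : Type*} [Monoid M] (A : Set M) (u v : List ↥A) :
    (u, v) ∈ SWP A ↔ u ≠ [] ∧ v ≠ [] ∧
      (u.map Subtype.val).prod = (v.map Subtype.val).prod := by
  constructor
  · rintro ⟨hu, hv, h⟩
    rw [evalWord_eq_prod _ _ hu, evalWord_eq_prod _ _ hv] at h
    exact ⟨hu, hv, by simpa using h⟩
  · rintro ⟨hu, hv, h⟩
    exact ⟨hu, hv, by rw [evalWord_eq_prod _ _ hu, evalWord_eq_prod _ _ hv, h]⟩

end Aux

/-- For a monoid generated by `A` as a monoid, the semigroup word problem of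
the subsemigroup generated by `A` is rational iff the monoid word problem is
rational. -/
theorem stmt_11 {M : Type*} [Monoid M] (A : Set M) (hA : A.Finite)
    (hgen : Submonoid.closure A = ⊤) :
    IsRationalRel (SWP A) ↔ IsRationalRel (MWP A) := by
  constructor
  · intro hS
    by_cases h : ∃ w : List ↥A, w ≠ [] ∧ (w.map Subtype.val).prod = 1
    · obtain ⟨w, hw, hw1⟩ := h
      have heq : MWP A = SWP A ∪ ({p : List ↥A × List ↥A | p.2 = [] ∧ (p.1, w) ∈ SWP A} ∪
          ({p : List ↥A × List ↥A | p.1 = [] ∧ (w, p.2) ∈ SWP A} ∪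
           {p : List ↥A × List ↥A | p.1 = [] ∧ p.2 = []})) := by
        ext ⟨u, v⟩
        simp only [MWP, Set.mem_setOf_eq, Set.mem_union, swp_iff]
        constructor
        · intro hprod
          rcases eq_or_ne u [] with rfl | hu
          · rcases eq_or_ne v [] with rfl | hv
            · exact Or.inr (Or.inr (Or.inr ⟨rfl, rfl⟩))
            · refine Or.inr (Or.inr (Or.inl ⟨rfl, hw, hv, ?_⟩))
              rw [hw1, ← hprod]; simp
          · rcases eq_or_ne v [] with rfl | hv
            · refine Or.inr (Or.inl ⟨rfl, hu, hw, ?_⟩)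
              rw [hw1, hprod]; simp
            · exact Or.inl ⟨hu, hv, hprod⟩
        · rintro (⟨_, _, h⟩ | ⟨h2, _, _, h⟩ | ⟨h1, _, _, h⟩ | ⟨h1, h2⟩)
          · exact h
          · rw [h2, h, hw1]; simp
          · rw [h1, ← h, hw1]; simp
          · rw [h1, h2]
      rw [heq]
      exact isRationalRel_union hS (isRationalRel_union (isRationalRel_sectL hS w)
        (isRationalRel_union (isRationalRel_sectR hS w) isRationalRel_eps))
    · have heq : MWP A = SWP A ∪ {p : List ↥A × List ↥A | p.1 = [] ∧ p.2 = []} := by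
        ext ⟨u, v⟩
        simp only [MWP, Set.mem_setOf_eq, Set.mem_union, swp_iff]
        constructor
        · intro hprod
          rcases eq_or_ne u [] with rfl | hu
          · rcases eq_or_ne v [] with rfl | hv
            · exact Or.inr ⟨rfl, rfl⟩
            · exact absurd ⟨v, hv, by simpa using hprod.symm⟩ h
          · rcases eq_or_ne v [] with rfl | hv
            · exact absurd ⟨u, hu, by simpa using hprod⟩ h
            · exact Or.inl ⟨hu, hv, hprod⟩
        · rintro (⟨_, _, h⟩ | ⟨h1, h2⟩)
          · exact h
          · rw [h1, h2]
      rw [heq]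
      exact isRationalRel_union hS isRationalRel_eps
  · intro hM
    have heq : SWP A = MWP A ∩ {p : List ↥A × List ↥A | p.1 ≠ [] ∧ p.2 ≠ []} := by
      ext ⟨u, v⟩
      rw [Set.mem_inter_iff, swp_iff]
      simp only [MWP, Set.mem_setOf_eq]
      tauto
    rw [heq]
    exact isRationalRel_inter_ne hM
end

section
/- Let S be an infinite finitely generated semigroup with rational word problem. Then S is not periodic: there exists y ∈ S such that the monogenic subsemigroup ⟨y⟩ is infinite. -/
namespace Stmt12

open AsyncFSA

variable {A B : Type*} {M : AsyncFSA A B}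

lemma reaches_trans {q r s : M.Q} {u v : List A} {u' v' : List B}
    (h1 : M.Reaches q u u' r) (h2 : M.Reaches r v v' s) :
    M.Reaches q (u ++ v) (u' ++ v') s := by
  induction h1 with
  | refl _ => simpa using h2
  | step ht _ ih =>
    rw [List.append_assoc, List.append_assoc]
    exact Reaches.step ht (ih h2)

lemma reaches_single {p q : M.Q} {a : Option A} {b : Option B} (h : M.trans p a b q) :
    M.Reaches p a.toList b.toList q := by
  simpa using Reaches.step h (Reaches.refl q)

lemma firstB {q r : M.Q} {w : List A} {v : List B}
    (h : M.Reaches q w v r) :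
    ∀ b v', v = b :: v' →
      ∃ w1 a w2 p p', w = w1 ++ a.toList ++ w2 ∧
        M.Reaches q w1 [] p ∧ M.trans p a (some b) p' ∧ M.Reaches p' w2 v' r := by
  induction h with
  | refl _ => intro b v' hv; exact absurd hv (by simp)
  | @step p q r a bopt u v0 ht hr ih =>
    intro b v' hv
    cases bopt with
    | none =>
      simp only [Option.toList_none, List.nil_append] at hv
      obtain ⟨w1, a', w2, p1, p1', hw, h1, h2, h3⟩ := ih b v' hv
      refine ⟨a.toList ++ w1, a', w2, p1, p1', by
        rw [hw]; simp [List.append_assoc], ?_, h2, h3⟩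
      have := reaches_trans (reaches_single ht) h1
      simpa using this
    | some b0 =>
      simp only [Option.toList_some, List.singleton_append, List.cons.injEq] at hv
      obtain ⟨rfl, rfl⟩ := hv
      exact ⟨[], a, u, p, q, by simp, Reaches.refl _, ht, hr⟩

lemma peel {q r : M.Q} {w : List A} {v : List B} (h : M.Reaches q w v r) :
    v = [] → ∀ x u', w = x :: u' →
      ∃ p, M.Reaches q [x] [] p ∧ M.Reaches p u' [] r := by
  induction h with
  | refl _ => intro _ x u' hw; exact absurd hw (by simp)
  | @step p q r a bopt u v0 ht hr ih =>
    intro hv x u' hw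
    have hb : bopt = none ∧ v0 = [] := by
      cases bopt <;> simp_all
    obtain ⟨rfl, rfl⟩ := hb
    cases a with
    | none =>
      simp only [Option.toList_none, List.nil_append] at hw
      obtain ⟨p1, h1, h2⟩ := ih rfl x u' hw
      refine ⟨p1, ?_, h2⟩
      have := reaches_trans (reaches_single ht) h1
      simpa using this
    | some x0 =>
      simp only [Option.toList_some, List.singleton_append, List.cons.injEq] at hw
      obtain ⟨rfl, rfl⟩ := hw
      exact ⟨q, reaches_single ht, hr⟩

/-- segment of a list -/
def seg (u : List A) (i j : ℕ) : List A := (u.drop i).take (j - i)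

lemma chain {q r : M.Q} {u : List A} (h : M.Reaches q u [] r) :
    ∃ c : ℕ → M.Q, c 0 = q ∧
      (∀ i j, i ≤ j → j ≤ u.length → M.Reaches (c i) (seg u i j) [] (c j)) ∧
      (∀ j, j ≤ u.length → M.Reaches (c j) (u.drop j) [] r) := by
  induction u generalizing q with
  | nil =>
    refine ⟨fun _ => q, rfl, ?_, ?_⟩
    · intro i j hij hj
      simp only [List.length_nil, Nat.le_zero] at hj
      subst hj
      interval_cases i
      simpa [seg] using Reaches.refl q
    · intro j hj
      simp only [List.length_nil, Nat.le_zero] at hj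
      subst hj
      simpa using h
  | cons x u' ih =>
    obtain ⟨p, h1, h2⟩ := peel h rfl x u' rfl
    obtain ⟨c', hc0, hcpair, hctail⟩ := ih h2
    refine ⟨fun k => match k with | 0 => q | k+1 => c' k, rfl, ?_, ?_⟩
    · intro i j hij hj
      match i, j with
      | 0, 0 => simpa [seg] using Reaches.refl q
      | 0, (j'+1) =>
        have hs : seg (x :: u') 0 (j'+1) = [x] ++ seg u' 0 j' := by
          simp [seg]
        rw [hs]
        have := reaches_trans h1 (by
          have := hcpair 0 j' (Nat.zero_le _) (by simpa using Nat.succ_le_succ_iff.mp hj)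
          rwa [hc0] at this)
        simpa using this
      | (i'+1), (j'+1) =>
        have hs : seg (x :: u') (i'+1) (j'+1) = seg u' i' j' := by
          simp [seg]
        rw [hs]
        exact hcpair i' j' (by omega) (by simpa using Nat.succ_le_succ_iff.mp hj)
    · intro j hj
      match j with
      | 0 => simpa using h
      | (j'+1) =>
        simpa using hctail j' (by simpa using Nat.succ_le_succ_iff.mp hj)

lemma silent_loop {q r : M.Q} {u : List A} (h : M.Reaches q u [] r)
    (hlen : Nat.card M.Q ≤ u.length) :
    ∃ x β y p, u = x ++ β ++ y ∧ β ≠ [] ∧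
      M.Reaches q x [] p ∧ M.Reaches p β [] p ∧ M.Reaches p y [] r := by
  haveI := M.fin
  haveI : Fintype M.Q := Fintype.ofFinite _
  obtain ⟨c, hc0, hcpair, hctail⟩ := chain h
  set N := Nat.card M.Q with hN
  have key : ∀ i j : ℕ, i < j → j ≤ N → c i = c j →
      ∃ x β y p, u = x ++ β ++ y ∧ β ≠ [] ∧
        M.Reaches q x [] p ∧ M.Reaches p β [] p ∧ M.Reaches p y [] r := by
    intro i j hij hjN hc
    have hju : j ≤ u.length := hjN.trans hlen
    have hdrop : seg u i j ++ u.drop j = u.drop i := by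
      have hd : u.drop j = (u.drop i).drop (j - i) := by
        rw [List.drop_drop]
        congr 1
        omega
      rw [seg, hd, List.take_append_drop]
    refine ⟨u.take i, seg u i j, u.drop j, c i, ?_, ?_, ?_, ?_, ?_⟩
    · rw [List.append_assoc, hdrop, List.take_append_drop]
    · have : (seg u i j).length = min (j - i) (u.length - i) := by
        simp [seg]
      intro hnil
      rw [hnil] at this
      simp only [List.length_nil] at this
      omega
    · have hs : seg u 0 i = u.take i := by simp [seg]
      have := hcpair 0 i (Nat.zero_le _) (le_trans (le_of_lt hij) hju)
      rw [hs, hc0] at this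
      exact this
    · have := hcpair i j (le_of_lt hij) hju
      rwa [← hc] at this
    · rw [hc]; exact hctail j hju
  have hcard : Fintype.card M.Q < Fintype.card (Fin (N+1)) := by
    simp [hN, Nat.card_eq_fintype_card]
  obtain ⟨i, j, hne, heq⟩ := Fintype.exists_ne_map_eq_of_card_lt
    (fun k : Fin (N+1) => c k) hcard
  have hne' : (i : ℕ) ≠ (j : ℕ) := fun hcontra => hne (Fin.ext hcontra)
  rcases hne'.lt_or_gt with hij | hij
  · exact key i j hij (by omega) heq
  · exact key j i hij (by omega) heq.symm

lemma phase_decomp {r : M.Q} :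
    ∀ (v : List B) (w : List A) (q : M.Q), M.Reaches q w v r →
      (Nat.card M.Q + 1) * (v.length + 1) ≤ w.length →
      ∃ x1 u x2 v1 v2 p p', w = x1 ++ u ++ x2 ∧ v = v1 ++ v2 ∧
        Nat.card M.Q ≤ u.length ∧
        M.Reaches q x1 v1 p ∧ M.Reaches p u [] p' ∧ M.Reaches p' x2 v2 r := by
  intro v
  induction v with
  | nil =>
    intro w q h hlen
    have hN : Nat.card M.Q + 1 ≤ w.length := by simpa using hlen
    exact ⟨[], w, [], [], [], q, r, by simp, by simp, by omega,
      Reaches.refl q, h, Reaches.refl r⟩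
  | cons b v' ih =>
    intro w q h hlen
    obtain ⟨w1, a, w2, p, p', hw, h1, ht, h2⟩ := firstB h b v' rfl
    by_cases hN : Nat.card M.Q ≤ w1.length
    · refine ⟨[], w1, a.toList ++ w2, [], b :: v', q, p, by simpa using hw, by simp,
        hN, Reaches.refl q, h1, ?_⟩
      have := Reaches.step ht h2
      simpa using this
    · have hlen2 : (Nat.card M.Q + 1) * (v'.length + 1) ≤ w2.length := by
        have hLa : a.toList.length ≤ 1 := by cases a <;> simp
        have hwlen : w.length = w1.length + a.toList.length + w2.length := by
          rw [hw]; simp [Nat.add_assoc]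
        have hexp : (Nat.card M.Q + 1) * ((b :: v').length + 1)
            = (Nat.card M.Q + 1) * (v'.length + 1) + (Nat.card M.Q + 1) := by
          rw [List.length_cons]
          exact Nat.mul_succ _ _
        rw [hexp] at hlen
        set X := (Nat.card M.Q + 1) * (v'.length + 1) with hX
        omega
      obtain ⟨x1', u, x2', v1', v2', p1, p1', hw2, hv', hu, r1, r2, r3⟩ :=
        ih w2 p' h2 hlen2
      refine ⟨w1 ++ a.toList ++ x1', u, x2', b :: v1', v2', p1, p1', ?_, ?_, hu, ?_, r2, r3⟩
      · rw [hw, hw2]; simp [List.append_assoc]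
      · rw [hv']; rfl
      · have hmid := reaches_single ht
        have := reaches_trans h1 (reaches_trans hmid r1)
        simpa [List.append_assoc] using this

lemma extract_red {q0 f : M.Q} {w : List A} {v : List B}
    (h : M.Reaches q0 w v f)
    (hlen : (Nat.card M.Q + 1) * (v.length + 1) ≤ w.length) :
    ∃ x β y v1 v2 p, w = x ++ β ++ y ∧ β ≠ [] ∧ v = v1 ++ v2 ∧
      M.Reaches q0 x v1 p ∧ M.Reaches p β [] p ∧ M.Reaches p y v2 f := by
  obtain ⟨x1, u, x2, v1, v2, p, p', hw, hv, hu, r1, r2, r3⟩ := phase_decomp v w q0 h hlen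
  obtain ⟨x', β, y', pm, hu2, hβ, s1, s2, s3⟩ := silent_loop r2 hu
  refine ⟨x1 ++ x', β, y' ++ x2, v1, v2, pm, ?_, hβ, hv, ?_, s2, ?_⟩
  · rw [hw, hu2]; simp [List.append_assoc]
  · have := reaches_trans r1 s1
    simpa using this
  · have := reaches_trans s3 r3
    simpa using this

/-! ### The reduction-certificate machine -/

variable (M) in
/-- States of the one-tape machine searching for a deletable loop. -/
def CSt := M.Q ⊕ (M.Q × M.Q × Bool) ⊕ M.Q

instance : Finite (CSt M) := by
  haveI := M.fin
  unfold CSt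
  infer_instance

variable (M) in
def ctrans : CSt M → Option A → CSt M → Prop
  | .inl q, a, .inl q' => ∃ b, M.trans q a b q'
  | .inl q, a, .inr (.inl (anc, q', bb)) => a = none ∧ anc = q ∧ q' = q ∧ bb = false
  | .inr (.inl (anc, q, bb)), a, .inr (.inl (anc', q', bb')) =>
      anc' = anc ∧ bb' = (bb || a.isSome) ∧ M.trans q a none q'
  | .inr (.inl (anc, q, bb)), a, .inr (.inr q') =>
      a = none ∧ q = anc ∧ q' = anc ∧ bb = true
  | .inr (.inr q), a, .inr (.inr q') => ∃ b, M.trans q a b q'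
  | _, _, _ => False

variable (M) in
inductive CSteps : CSt M → List A → CSt M → Prop
  | refl (c) : CSteps c [] c
  | step {c c' c'' : CSt M} {a : Option A} {l : List A} :
      ctrans M c a c' → CSteps c' l c'' → CSteps c (a.toList ++ l) c''

lemma csteps_trans {c c' c'' : CSt M} {u v : List A}
    (h1 : CSteps M c u c') (h2 : CSteps M c' v c'') : CSteps M c (u ++ v) c'' := by
  induction h1 with
  | refl _ => simpa using h2
  | step ht _ ih =>
    rw [List.append_assoc]
    exact CSteps.step ht (ih h2)

lemma csteps_single {c c' : CSt M} {a : Option A} (h : ctrans M c a c') :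
    CSteps M c a.toList c' := by
  simpa using CSteps.step h (CSteps.refl c')

lemma csteps_split {c c'' : CSt M} {z : List A} (h : CSteps M c z c'') :
    ∀ u v, z = u ++ v → ∃ c', CSteps M c u c' ∧ CSteps M c' v c'' := by
  induction h with
  | refl c =>
    intro u v huv
    obtain ⟨rfl, rfl⟩ := List.append_eq_nil_iff.mp huv.symm
    exact ⟨c, CSteps.refl c, CSteps.refl c⟩
  | @step c c1 c2 a l ht hr ih =>
    intro u v huv
    match u with
    | [] =>
      exact ⟨c, CSteps.refl c, by rw [List.nil_append] at huv; rw [← huv]; exact CSteps.step ht hr⟩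
    | x :: u' =>
      cases a with
      | none =>
        simp only [Option.toList_none, List.nil_append] at huv
        obtain ⟨c', s1, s2⟩ := ih (x :: u') v huv
        refine ⟨c', ?_, s2⟩
        have := csteps_trans (csteps_single ht) s1
        simpa using this
      | some x0 =>
        simp only [Option.toList_some, List.singleton_append, List.cons_append,
          List.cons.injEq] at huv
        obtain ⟨rfl, hl⟩ := huv
        obtain ⟨c', s1, s2⟩ := ih u' v hl
        refine ⟨c', ?_, s2⟩
        have := csteps_trans (csteps_single ht) s1
        simpa using this

variable (M) in
/-- Invariant for translating machine runs to certificates. -/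
def Phi : CSt M → List A → CSt M → Prop
  | .inl q, w, .inl q' => ∃ v, M.Reaches q w v q'
  | .inl q, w, .inr (.inl (anc, q', bb)) =>
      ∃ x β v1, w = x ++ β ∧ M.Reaches q x v1 anc ∧ M.Reaches anc β [] q' ∧
        (bb = true → β ≠ [])
  | .inl q, w, .inr (.inr q'') =>
      ∃ x β y v1 v2 p, w = x ++ β ++ y ∧ β ≠ [] ∧
        M.Reaches q x v1 p ∧ M.Reaches p β [] p ∧ M.Reaches p y v2 q''
  | .inr (.inl (anc, q, bb)), w, .inr (.inl (anc', q', bb')) =>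
      anc' = anc ∧ M.Reaches q w [] q' ∧ (bb' = true → bb = true ∨ w ≠ [])
  | .inr (.inl (anc, q, bb)), w, .inr (.inr q'') =>
      ∃ β y v2, w = β ++ y ∧ M.Reaches q β [] anc ∧ (bb = true ∨ β ≠ []) ∧
        M.Reaches anc y v2 q''
  | .inr (.inr q), w, .inr (.inr q') => ∃ v, M.Reaches q w v q'
  | _, _, _ => False

lemma toList_ne_nil_of_isSome {a : Option A} (h : a.isSome = true) : a.toList ≠ [] := by
  cases a <;> simp_all

lemma app_ne_nil_left {l1 l2 : List A} (h : l1 ≠ []) : l1 ++ l2 ≠ [] := by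
  intro hc; rw [List.append_eq_nil_iff] at hc; exact h hc.1

lemma app_ne_nil_right {l1 l2 : List A} (h : l2 ≠ []) : l1 ++ l2 ≠ [] := by
  intro hc; rw [List.append_eq_nil_iff] at hc; exact h hc.2

lemma phi_of_csteps {c c' : CSt M} {w : List A} (h : CSteps M c w c') : Phi M c w c' := by
  induction h with
  | refl c =>
    rcases c with q | ⟨anc, q, bb⟩ | q
    · exact ⟨[], Reaches.refl q⟩
    · exact ⟨rfl, Reaches.refl q, fun h => Or.inl h⟩
    · exact ⟨[], Reaches.refl q⟩
  | @step c c1 c2 a l ht _ ih =>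
    rcases c with q | ⟨anc, q, bb⟩ | q <;> rcases c1 with q1 | ⟨anc1, q1, bb1⟩ | q1
    · -- pre → pre
      obtain ⟨b, htr⟩ := ht
      rcases c2 with q2 | ⟨anc2, q2, bb2⟩ | q2
      · obtain ⟨v, run⟩ := ih
        exact ⟨b.toList ++ v, reaches_trans (reaches_single htr) run⟩
      · obtain ⟨x, β, v1, hl, r1, r2, hb⟩ := ih
        exact ⟨a.toList ++ x, β, b.toList ++ v1, by rw [hl, List.append_assoc],
          reaches_trans (reaches_single htr) r1, r2, hb⟩
      · obtain ⟨x, β, y, v1, v2, p, hl, hβ, r1, r2, r3⟩ := ih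
        exact ⟨a.toList ++ x, β, y, b.toList ++ v1, v2, p,
          by rw [hl]; simp [List.append_assoc], hβ,
          reaches_trans (reaches_single htr) r1, r2, r3⟩
    · -- pre → loop (enter)
      obtain ⟨ha, h1, h2, h3⟩ := ht
      subst ha; subst h1; subst h2; subst h3
      rcases c2 with q2 | ⟨anc2, q2, bb2⟩ | q2
      · exact ih.elim
      · obtain ⟨h1, run, himp⟩ := ih
        subst h1
        exact ⟨[], l, [], by simp, Reaches.refl _, run,
          fun hb => (himp hb).resolve_left (by simp)⟩
      · obtain ⟨β, y, v2, hl, rβ, hor, ry⟩ := ih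
        exact ⟨[], β, y, [], v2, _, by simpa using hl,
          hor.resolve_left (by simp), Reaches.refl _, rβ, ry⟩
    · -- pre → post : impossible
      exact ht.elim
    · -- loop → pre : impossible
      exact ht.elim
    · -- loop → loop
      obtain ⟨rfl, rfl, htr⟩ := ht
      rcases c2 with q2 | ⟨anc2, q2, bb2⟩ | q2
      · exact ih.elim
      · obtain ⟨h1, run, himp⟩ := ih
        refine ⟨h1, ?_, ?_⟩
        · have := reaches_trans (reaches_single htr) run
          simpa using this
        · intro hb
          rcases himp hb with hor | hl
          · rcases Bool.or_eq_true_iff.mp hor with hbb | hsome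
            · exact Or.inl hbb
            · exact Or.inr (app_ne_nil_left (toList_ne_nil_of_isSome hsome))
          · exact Or.inr (app_ne_nil_right hl)
      · obtain ⟨β, y, v2, hl, rβ, hor, ry⟩ := ih
        refine ⟨a.toList ++ β, y, v2, by rw [hl, List.append_assoc], ?_, ?_, ry⟩
        · have := reaches_trans (reaches_single htr) rβ
          simpa using this
        · rcases hor with hor | hβ
          · rcases Bool.or_eq_true_iff.mp hor with hbb | hsome
            · exact Or.inl hbb
            · exact Or.inr (app_ne_nil_left (toList_ne_nil_of_isSome hsome))
          · exact Or.inr (app_ne_nil_right hβ)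
    · -- loop → post (exit)
      obtain ⟨ha, h1, h2, h3⟩ := ht
      subst ha; subst h1; subst h2; subst h3
      rcases c2 with q2 | ⟨anc2, q2, bb2⟩ | q2
      · exact ih.elim
      · exact ih.elim
      · obtain ⟨v, run⟩ := ih
        exact ⟨[], l, v, by simp, Reaches.refl _, Or.inl rfl, run⟩
    · -- post → pre : impossible
      exact ht.elim
    · -- post → loop : impossible
      exact ht.elim
    · -- post → post
      obtain ⟨b, htr⟩ := ht
      rcases c2 with q2 | ⟨anc2, q2, bb2⟩ | q2
      · exact ih.elim
      · exact ih.elim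
      · obtain ⟨v, run⟩ := ih
        exact ⟨b.toList ++ v, reaches_trans (reaches_single htr) run⟩

lemma lift_pre {q p : M.Q} {x : List A} {v : List B} (h : M.Reaches q x v p) :
    CSteps M (.inl q) x (.inl p) := by
  induction h with
  | refl _ => exact CSteps.refl _
  | @step _ _ _ a b _ _ ht _ ih => exact CSteps.step (c' := .inl _) ⟨b, ht⟩ ih

lemma lift_post {q p : M.Q} {x : List A} {v : List B} (h : M.Reaches q x v p) :
    CSteps M (.inr (.inr q)) x (.inr (.inr p)) := by
  induction h with
  | refl _ => exact CSteps.refl _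
  | @step _ _ _ a b _ _ ht _ ih => exact CSteps.step (c' := .inr (.inr _)) ⟨b, ht⟩ ih

lemma lift_loop {q p : M.Q} {β : List A} {v : List B} (h : M.Reaches q β v p) :
    v = [] → ∀ anc bb, ∃ bb', CSteps M (.inr (.inl (anc, q, bb))) β (.inr (.inl (anc, p, bb')))
      ∧ (bb' = true ↔ (bb = true ∨ β ≠ [])) := by
  induction h with
  | refl _ =>
    intro _ anc bb
    exact ⟨bb, CSteps.refl _, by simp⟩
  | @step _ _ _ a b u v0 ht _ ih =>
    intro hv anc bb
    have hb : b = none ∧ v0 = [] := by cases b <;> simp_all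
    obtain ⟨rfl, rfl⟩ := hb
    obtain ⟨bb', s, hiff⟩ := ih rfl anc (bb || a.isSome)
    refine ⟨bb', CSteps.step (c' := .inr (.inl (anc, _, bb || a.isSome))) ⟨rfl, rfl, ht⟩ s, ?_⟩
    rw [hiff]
    cases a with
    | none => simp
    | some x => simp [app_ne_nil_left (l2 := u) (List.cons_ne_nil x [])]

variable (M) in
def cinit : CSt M := .inl M.init

variable (M) in
def cfinal : CSt M → Prop
  | .inr (.inr q) => q ∈ M.accept
  | _ => False

variable (M) in
/-- The machine accepts words admitting a deletable nonempty loop factor. -/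
def MachAcc (w : List A) : Prop := ∃ c, CSteps M (cinit M) w c ∧ cfinal M c

/-- Soundness: machine acceptance yields a reduction certificate. -/
lemma machacc_cert {w : List A} (h : MachAcc M w) :
    ∃ x β y v1 v2 p f, f ∈ M.accept ∧ w = x ++ β ++ y ∧ β ≠ [] ∧
      M.Reaches M.init x v1 p ∧ M.Reaches p β [] p ∧ M.Reaches p y v2 f := by
  obtain ⟨c, hs, hf⟩ := h
  have hphi := phi_of_csteps hs
  rcases c with q | _ | f
  · exact hf.elim
  · exact hf.elim
  · obtain ⟨x, β, y, v1, v2, p, hw, hβ, r1, r2, r3⟩ := hphi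
    exact ⟨x, β, y, v1, v2, p, f, hf, hw, hβ, r1, r2, r3⟩

/-- Completeness: a reduction certificate yields machine acceptance. -/
lemma cert_machacc {w x β y : List A} {v1 v2 : List B} {p f : M.Q}
    (hf : f ∈ M.accept) (hw : w = x ++ β ++ y) (hβ : β ≠ [])
    (r1 : M.Reaches M.init x v1 p) (r2 : M.Reaches p β [] p)
    (r3 : M.Reaches p y v2 f) : MachAcc M w := by
  refine ⟨.inr (.inr f), ?_, hf⟩
  have s1 : CSteps M (cinit M) x (.inl p) := lift_pre r1
  have senter : CSteps M (.inl p) [] (.inr (.inl (p, p, false))) :=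
    csteps_single (a := none) (c := .inl p) (c' := .inr (.inl (p, p, false)))
      ⟨rfl, rfl, rfl, rfl⟩
  obtain ⟨bb', sloop, hiff⟩ := lift_loop r2 rfl p false
  have hbb' : bb' = true := hiff.mpr (Or.inr hβ)
  subst hbb'
  have sexit : CSteps M (.inr (.inl (p, p, true))) [] (.inr (.inr p)) :=
    csteps_single (a := none) ⟨rfl, rfl, rfl, rfl⟩
  have s3 : CSteps M (.inr (.inr p)) y (.inr (.inr f)) := lift_post r3
  have := csteps_trans s1 (csteps_trans senter (csteps_trans sloop
    (csteps_trans sexit s3)))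
  simpa [hw, List.append_assoc] using this

variable (M) in
/-- DFA (by subset construction) for the complement of `MachAcc`. -/
def redDFA : DFA A (Set (CSt M)) where
  step St a := {c' | ∃ c ∈ St, CSteps M c [a] c'}
  start := {c | CSteps M (cinit M) [] c}
  accept := {St | ∀ c ∈ St, ¬ cfinal M c}

lemma redDFA_eval (w : List A) :
    (redDFA M).evalFrom (redDFA M).start w = {c | CSteps M (cinit M) w c} := by
  induction w using List.reverseRecOn with
  | nil => rfl
  | append_singleton w a ih =>
    rw [DFA.evalFrom_append_singleton, ih]
    ext c'
    constructor
    · rintro ⟨c, hc, h1⟩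
      exact csteps_trans hc h1
    · intro h
      obtain ⟨c, h1, h2⟩ := csteps_split h w [a] rfl
      exact ⟨c, h1, h2⟩

lemma mem_redDFA {w : List A} : w ∈ (redDFA M).accepts ↔ ¬ MachAcc M w := by
  rw [DFA.mem_accepts]
  show ((redDFA M).evalFrom (redDFA M).start w ∈ (redDFA M).accept) ↔ _
  rw [redDFA_eval]
  constructor
  · rintro hall ⟨c, hs, hf⟩
    exact hall c hs hf
  · intro h c hs hf
    exact h ⟨c, hs, hf⟩

section EV

variable {S : Type*} [Semigroup S] {γ : Type*} (f : γ → S)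

def ev1 (w : List γ) : WithOne S := (w.map fun x => (f x : WithOne S)).prod

lemma ev1_append (u v : List γ) : ev1 f (u ++ v) = ev1 f u * ev1 f v := by
  simp [ev1]

lemma foldl_coe (l : List γ) : ∀ s : S,
    ((List.foldl (fun s x => s * f x) s l : S) : WithOne S) = (s : WithOne S) * ev1 f l := by
  induction l with
  | nil => intro s; simp [ev1]
  | cons x l ih =>
    intro s
    rw [List.foldl_cons, ih]
    simp [ev1, mul_assoc]

lemma evalWord_some {w : List γ} (hw : w ≠ []) :
    ∃ s : S, evalWord f w = some s ∧ ev1 f w = (s : WithOne S) := by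
  cases w with
  | nil => exact absurd rfl hw
  | cons a l =>
    refine ⟨List.foldl (fun s x => s * f x) (f a) l, rfl, ?_⟩
    rw [foldl_coe]
    simp [ev1]

lemma ev1_of_evalWord {w : List γ} {s : S} (h : evalWord f w = some s) :
    ev1 f w = (s : WithOne S) ∧ w ≠ [] := by
  have hw : w ≠ [] := by rintro rfl; simp [evalWord] at h
  obtain ⟨s', h1, h2⟩ := evalWord_some f hw
  rw [h] at h1
  obtain rfl : s' = s := by simpa using h1.symm
  exact ⟨h2, hw⟩

lemma evalWord_eq_of_ev1 {w w' : List γ} (hw : w ≠ []) (hw' : w' ≠ [])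
    (h : ev1 f w = ev1 f w') : evalWord f w = evalWord f w' := by
  obtain ⟨s, h1, h2⟩ := evalWord_some f hw
  obtain ⟨s', h1', h2'⟩ := evalWord_some f hw'
  rw [h1, h1']
  have hss : (s : WithOne S) = (s' : WithOne S) := by rw [← h2, ← h2', h]
  rw [WithOne.coe_inj.mp hss]

def wpow (b : List γ) : ℕ → List γ
  | 0 => []
  | n+1 => b ++ wpow b n

lemma ev1_wpow (b : List γ) (n : ℕ) : ev1 f (wpow b n) = (ev1 f b) ^ n := by
  induction n with
  | zero => simp [wpow, ev1]
  | succ n ih => rw [wpow, ev1_append, ih, pow_succ']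

lemma wpow_length (b : List γ) (n : ℕ) : (wpow b n).length = n * b.length := by
  induction n with
  | zero => simp [wpow]
  | succ n ih => simp [wpow, ih, Nat.succ_mul]; omega

lemma wpow_flatten (b : List γ) (n : ℕ) : wpow b n = (List.replicate n b).flatten := by
  induction n with
  | zero => simp [wpow]
  | succ n ih => simp [wpow, ih, List.replicate_succ]

lemma pow_shift {Mo : Type*} [Monoid Mo] (g : Mo) (i p : ℕ) (hp : g ^ i = g ^ (i + p)) :
    ∀ t, g ^ (i + t * p) = g ^ i := by
  intro t
  induction t with
  | zero => simp
  | succ t ih =>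
    have h2 : i + (t + 1) * p = i + p + t * p := by ring
    calc g ^ (i + (t + 1) * p) = g ^ (i + p) * g ^ (t * p) := by rw [h2, pow_add]
    _ = g ^ i * g ^ (t * p) := by rw [← hp]
    _ = g ^ (i + t * p) := by rw [← pow_add]
    _ = g ^ i := ih

end EV

end Stmt12

open Stmt12 in
/-- An infinite finitely generated semigroup with rational word problem is not
periodic: some element generates an infinite monogenic subsemigroup. -/
theorem stmt_12 {S : Type*} [Semigroup S] [Infinite S] (A : Set S)
    (hA : A.Finite) (hgen : Subsemigroup.closure A = ⊤)
    (hrat : IsRationalRel (SWP A)) :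
    ∃ y : S, ((Subsemigroup.closure {y} : Subsemigroup S) : Set S).Infinite := by
  classical
  by_contra hper
  push_neg at hper
  have hfin : ∀ y : S, ((Subsemigroup.closure {y} : Subsemigroup S) : Set S).Finite :=
    fun y => hper y
  obtain ⟨M, hM⟩ := hrat
  haveI := M.fin
  haveI : Finite ↥A := hA.to_subtype
  -- every element has a representative word
  have hrep : ∀ s : S, ∃ w : List ↥A, w ≠ [] ∧ evalWord (Subtype.val : ↥A → S) w = some s := by
    intro s
    have hs : s ∈ Subsemigroup.closure A := by rw [hgen]; exact Subsemigroup.mem_top s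
    induction hs using Subsemigroup.closure_induction with
    | mem x hx => exact ⟨[⟨x, hx⟩], by simp, rfl⟩
    | mul x y hx hy ihx ihy =>
      obtain ⟨w1, h1, e1⟩ := ihx
      obtain ⟨w2, h2, e2⟩ := ihy
      refine ⟨w1 ++ w2, app_ne_nil_left (l2 := w2) h1, ?_⟩
      obtain ⟨s12, hs12, hev12⟩ := evalWord_some (Subtype.val : ↥A → S) (app_ne_nil_left (l2 := w2) h1)
      have e1' := (ev1_of_evalWord _ e1).1
      have e2' := (ev1_of_evalWord _ e2).1
      have hval : s12 = x * y := by
        apply WithOne.coe_inj.mp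
        rw [← hev12, ev1_append, e1', e2', WithOne.coe_mul]
      rw [hs12, hval]
  -- minimal length representatives
  have hminrep : ∀ s : S, ∃ w : List ↥A, w ≠ [] ∧ evalWord (Subtype.val : ↥A → S) w = some s ∧
      ∀ w' : List ↥A, w' ≠ [] → evalWord (Subtype.val : ↥A → S) w' = some s →
        w.length ≤ w'.length := by
    intro s
    obtain ⟨w0, h0, e0⟩ := hrep s
    have hex : ∃ n, ∃ w : List ↥A, w.length = n ∧ w ≠ [] ∧
        evalWord (Subtype.val : ↥A → S) w = some s := ⟨w0.length, w0, rfl, h0, e0⟩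
    obtain ⟨w, hlen, hne, hev⟩ := Nat.find_spec hex
    refine ⟨w, hne, hev, ?_⟩
    intro w' h1 h2
    have := Nat.find_min' hex ⟨w', rfl, h1, h2⟩
    omega
  -- minimal representatives are not machine-accepted
  have hmin_notacc : ∀ (s : S) (w : List ↥A), evalWord (Subtype.val : ↥A → S) w = some s →
      (∀ w' : List ↥A, w' ≠ [] → evalWord (Subtype.val : ↥A → S) w' = some s →
        w.length ≤ w'.length) →
      ¬ MachAcc M w := by
    intro s w hev hmin hacc
    obtain ⟨x, β, y, v1, v2, p, fst, hfst, hw, hβ, r1, r2, r3⟩ := machacc_cert hacc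
    have run_full : M.Reaches M.init w (v1 ++ v2) fst := by
      rw [hw]
      have := reaches_trans r1 (reaches_trans r2 r3)
      simpa [List.append_assoc] using this
    have hswp_full : (w, v1 ++ v2) ∈ SWP A := (hM (w, v1 ++ v2)).mpr ⟨fst, hfst, run_full⟩
    have run_red : M.Reaches M.init (x ++ y) (v1 ++ v2) fst := reaches_trans r1 r3
    have hswp_red : (x ++ y, v1 ++ v2) ∈ SWP A := (hM (x ++ y, v1 ++ v2)).mpr
      ⟨fst, hfst, run_red⟩
    obtain ⟨hne_red, hne_v, hev_red⟩ := hswp_red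
    obtain ⟨-, -, hev_full⟩ := hswp_full
    have hxy : evalWord (Subtype.val : ↥A → S) (x ++ y) = some s := by
      rw [hev_red, ← hev_full, hev]
    have hcon := hmin (x ++ y) hne_red hxy
    rw [hw] at hcon
    simp only [List.length_append] at hcon
    have hβlen : 0 < β.length := List.length_pos_iff.mpr hβ
    omega
  haveI : Fintype (Set (CSt M)) := Fintype.ofFinite _
  set D := (redDFA M).accepts with hD
  have hD_inf : D.Infinite := by
    choose ms hms1 hms2 hms3 using hminrep
    apply Set.infinite_of_injective_forall_mem (f := ms)
    · intro s s' h
      have h1 := hms2 s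
      rw [h, hms2 s'] at h1
      exact (Option.some_inj.mp h1).symm
    · intro s
      exact (mem_redDFA (M := M)).mpr (hmin_notacc s (ms s) (hms2 s) (hms3 s))
  obtain ⟨W, hWD, hWlen⟩ : ∃ W ∈ D, Fintype.card (Set (CSt M)) ≤ W.length := by
    by_contra hcon
    push_neg at hcon
    exact hD_inf (Set.Finite.subset (List.finite_length_lt ↥A (Fintype.card (Set (CSt M))))
      (fun w hw => hcon w hw))
  obtain ⟨x1, y1, z1, hWeq, -, hy1ne, hpump⟩ := (redDFA M).pumping_lemma hWD hWlen
  have hpump' : ∀ m : ℕ, x1 ++ wpow y1 m ++ z1 ∈ D := by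
    intro m
    apply hpump
    have hk : wpow y1 m ∈ KStar.kstar ({y1} : Language ↥A) := by
      rw [wpow_flatten]
      exact Language.join_mem_kstar (fun y hy => by
        rw [List.eq_of_mem_replicate hy]; exact Set.mem_singleton _)
    have : (x1 ++ wpow y1 m) ++ z1 ∈ ({x1} : Language ↥A) * KStar.kstar ({y1} : Language ↥A) *
        ({z1} : Language ↥A) :=
      Language.append_mem_mul (Language.append_mem_mul (Set.mem_singleton _) hk)
        (Set.mem_singleton _)
    exact this
  -- the value of the pumped factor
  obtain ⟨g0, hev_g, hev1_g⟩ := evalWord_some (Subtype.val : ↥A → S) hy1ne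
  set g : WithOne S := ((g0 : S) : WithOne S) with hg
  -- powers of g0 lie in the monogenic subsemigroup
  have hpow_closure : ∀ k : ℕ, ∃ u, u ∈ Subsemigroup.closure ({g0} : Set S) ∧
      ((u : S) : WithOne S) = g ^ (k + 1) := by
    intro k
    induction k with
    | zero => exact ⟨g0, Subsemigroup.subset_closure rfl, by simp [hg]⟩
    | succ k ih =>
      obtain ⟨u, hu, hval⟩ := ih
      refine ⟨u * g0, mul_mem hu (Subsemigroup.subset_closure rfl), ?_⟩
      rw [WithOne.coe_mul, hval, ← hg, ← pow_succ]
  choose pu hpu hpuval using hpow_closure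
  have hfing : ((Subsemigroup.closure ({g0} : Set S) : Subsemigroup S) : Set S).Finite :=
    hfin g0
  haveI := hfing.to_subtype
  obtain ⟨k1, k2, hkne, hkeq⟩ : ∃ k1 k2 : ℕ, k1 ≠ k2 ∧ pu k1 = pu k2 := by
    obtain ⟨k1, k2, hne, he⟩ := Finite.exists_ne_map_eq_of_infinite
      (fun k : ℕ => (⟨pu k, hpu k⟩ :
        ((Subsemigroup.closure ({g0} : Set S) : Subsemigroup S) : Set S)))
    exact ⟨k1, k2, hne, Subtype.ext_iff.mp he⟩
  have key : ∀ k1 k2 : ℕ, k1 < k2 → pu k1 = pu k2 →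
      ∃ i pp : ℕ, 1 ≤ i ∧ 1 ≤ pp ∧ g ^ i = g ^ (i + pp) := by
    intro k1 k2 h hk
    refine ⟨k1 + 1, k2 - k1, by omega, by omega, ?_⟩
    have h1 : ((pu k1 : S) : WithOne S) = ((pu k2 : S) : WithOne S) := by rw [hk]
    rw [hpuval k1, hpuval k2] at h1
    have h2 : k1 + 1 + (k2 - k1) = k2 + 1 := by omega
    rw [h2]
    exact h1
  obtain ⟨i, pp, hi1, hp1, hgp⟩ : ∃ i pp : ℕ, 1 ≤ i ∧ 1 ≤ pp ∧ g ^ i = g ^ (i + pp) := by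
    rcases hkne.lt_or_gt with h | h
    · exact key k1 k2 h hkeq
    · exact key k2 k1 h hkeq.symm
  have hshift := pow_shift g i pp hgp
  set WF : ℕ → List ↥A := fun t => x1 ++ wpow y1 (i + t * pp) ++ z1 with hWF
  have hWmem : ∀ t, WF t ∈ D := fun t => hpump' (i + t * pp)
  have hy1pos : 1 ≤ y1.length := List.length_pos_iff.mpr hy1ne
  have hWne : ∀ t, WF t ≠ [] := by
    intro t
    obtain ⟨n, hn⟩ : ∃ n, i + t * pp = n + 1 := ⟨i + t * pp - 1, by omega⟩
    simp only [hWF]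
    rw [hn]
    exact app_ne_nil_left (app_ne_nil_right (app_ne_nil_left hy1ne))
  have hWev1 : ∀ t, ev1 (Subtype.val : ↥A → S) (WF t) = ev1 (Subtype.val : ↥A → S) (WF 0) := by
    intro t
    have h0 : i + 0 * pp = i := by omega
    simp only [hWF, ev1_append, ev1_wpow, hev1_g, ← hg]
    rw [hshift t, h0]
  obtain ⟨tval, hev_t, hev1_t⟩ := evalWord_some (Subtype.val : ↥A → S) (hWne 0)
  have hWev : ∀ t, evalWord (Subtype.val : ↥A → S) (WF t) = some tval := by
    intro t
    rw [evalWord_eq_of_ev1 (Subtype.val : ↥A → S) (hWne t) (hWne 0) (hWev1 t), hev_t]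
  obtain ⟨w0, hw0ne, hw0ev, hw0min⟩ := hminrep tval
  have hlen_gen : ∀ t : ℕ, t ≤ (WF t).length := by
    intro t
    have h1 : (i + t * pp) * y1.length ≤ (WF t).length := by
      simp only [hWF, List.length_append, wpow_length]
      omega
    have h2 : t ≤ t * pp := by
      calc t = t * 1 := (mul_one t).symm
      _ ≤ t * pp := Nat.mul_le_mul_left t hp1
    have h3 : i + t * pp ≤ (i + t * pp) * y1.length := by
      calc i + t * pp = (i + t * pp) * 1 := (mul_one _).symm
      _ ≤ (i + t * pp) * y1.length := Nat.mul_le_mul_left _ hy1pos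
    omega
  have hswp : (WF ((Nat.card M.Q + 1) * (w0.length + 1)), w0) ∈ SWP A :=
    ⟨hWne _, hw0ne, by rw [hWev, hw0ev]⟩
  obtain ⟨fst, hfst, hrun⟩ := (hM (WF ((Nat.card M.Q + 1) * (w0.length + 1)), w0)).mp hswp
  obtain ⟨x, β, y, v1, v2, p, hweq2, hβ2, hveq2, r1, r2, r3⟩ :=
    extract_red hrun (hlen_gen ((Nat.card M.Q + 1) * (w0.length + 1)))
  have hmach : MachAcc M (WF ((Nat.card M.Q + 1) * (w0.length + 1))) :=
    cert_machacc hfst hweq2 hβ2 r1 r2 r3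
  exact (mem_redDFA (M := M)).mp (hWmem _) hmach
end
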